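/- arXiv:1307.3817 — 11 statements merged into one kernel-verified Lean document; each statement's English description precedes it below -/
import Mathlib

section
/- Let (X,f) be a topological dynamical system. If the product system (X×X, f×f) is transitive (i.e., (X,f) is weakly mixing), then for every positive integer n the n-fold product system (X^n, f×f×⋯×f) (n copies) is transitive. -/
open Function Set Filter Topology MeasureTheory

/-- A topological dynamical system `f : X → X` is (topologically) transitive if for every
two non-empty open subsets `U`, `V` there exists `n ≥ 1` with `f^[n] '' U ∩ V ≠ ∅`. -/
def IsTopTransitive {X : Type*} [TopologicalSpace X] (f : X → X) : Prop :=
  ∀ U V : Set X, IsOpen U → IsOpen V → U.Nonempty → V.Nonempty →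
    ∃ n : ℕ, 1 ≤ n ∧ (f^[n] '' U ∩ V).Nonempty

/-- Multi-transitivity with respect to a vector `a = (a₁, …, a_r)`: the product system
`(X^r, f^{a₁} × ⋯ × f^{a_r})` is transitive. -/
def MultiTransWrt {X : Type*} [TopologicalSpace X] (f : X → X) {r : ℕ} (a : Fin r → ℕ) : Prop :=
  IsTopTransitive (fun x : Fin r → X => fun i => f^[a i] (x i))

/-- `(X, f)` is multi-transitive if it is multi-transitive with respect to `(1, 2, …, n)`
for every `n ≥ 1`. -/
def MultiTrans {X : Type*} [TopologicalSpace X] (f : X → X) : Prop :=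
  ∀ n : ℕ, 1 ≤ n → MultiTransWrt f (fun i : Fin n => (i : ℕ) + 1)

/-- `(X, f)` is strongly multi-transitive if it is multi-transitive with respect to every
vector of positive integers. -/
def StrongMultiTrans {X : Type*} [TopologicalSpace X] (f : X → X) : Prop :=
  ∀ r : ℕ, 1 ≤ r → ∀ a : Fin r → ℕ, (∀ i, 1 ≤ a i) → MultiTransWrt f a

/-- The hitting time set `N(U, V) = {n ≥ 1 : f^[n] '' U ∩ V ≠ ∅}`. -/
def HittingTimes {X : Type*} [TopologicalSpace X] (f : X → X) (U V : Set X) : Set ℕ :=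
  {n : ℕ | 1 ≤ n ∧ (f^[n] '' U ∩ V).Nonempty}

section Aux
variable {X : Type*} [TopologicalSpace X] (f : X → X)

lemma iter_pair (n : ℕ) (p : X × X) :
    (fun p : X × X => (f p.1, f p.2))^[n] p = (f^[n] p.1, f^[n] p.2) := by
  induction n generalizing p with
  | zero => simp
  | succ k ih => simp [Function.iterate_succ_apply, ih]

lemma iter_pi {r : ℕ} (n : ℕ) (x : Fin r → X) :
    (fun x : Fin r → X => fun i => f (x i))^[n] x = fun i => f^[n] (x i) := by
  induction n generalizing x with
  | zero => simp
  | succ k ih => simp [Function.iterate_succ_apply, ih]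

lemma hit_mem {n : ℕ} {U V : Set X} (h1 : 1 ≤ n) {x : X} (hx : x ∈ U) (hfx : f^[n] x ∈ V) :
    n ∈ HittingTimes f U V :=
  ⟨h1, ⟨f^[n] x, ⟨x, hx, rfl⟩, hfx⟩⟩

variable [Nonempty X]
  (hwm : IsTopTransitive (fun p : X × X => (f p.1, f p.2)))

include hwm

/-- weak mixing gives intersections of two hitting-time sets nonempty -/
lemma hit_two {U1 V1 U2 V2 : Set X} (hU1 : IsOpen U1) (hV1 : IsOpen V1)
    (hU2 : IsOpen U2) (hV2 : IsOpen V2) (hU1n : U1.Nonempty) (hV1n : V1.Nonempty)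
    (hU2n : U2.Nonempty) (hV2n : V2.Nonempty) :
    ∃ n, n ∈ HittingTimes f U1 V1 ∧ n ∈ HittingTimes f U2 V2 := by
  obtain ⟨n, hn1, y, ⟨p, hp, rfl⟩, hyV⟩ :=
    hwm (U1 ×ˢ U2) (V1 ×ˢ V2) (hU1.prod hU2) (hV1.prod hV2)
      (hU1n.prod hU2n) (hV1n.prod hV2n)
  rw [iter_pair] at hyV
  exact ⟨n, hit_mem f hn1 hp.1 hyV.1, hit_mem f hn1 hp.2 hyV.2⟩

lemma hit_nonempty {U V : Set X} (hU : IsOpen U) (hV : IsOpen V)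
    (hUn : U.Nonempty) (hVn : V.Nonempty) : (HittingTimes f U V).Nonempty := by
  obtain ⟨n, h, _⟩ := hit_two f hwm hU hV hU hV hUn hVn hUn hVn
  exact ⟨n, h⟩

variable (hf : Continuous f)
include hf

/-- Furstenberg: hitting-time sets form a filter base -/
lemma hit_base {U1 V1 U2 V2 : Set X} (hU1 : IsOpen U1) (hV1 : IsOpen V1)
    (hU2 : IsOpen U2) (hV2 : IsOpen V2) (hU1n : U1.Nonempty) (hV1n : V1.Nonempty)
    (hU2n : U2.Nonempty) (hV2n : V2.Nonempty) :
    ∃ U V : Set X, IsOpen U ∧ IsOpen V ∧ U.Nonempty ∧ V.Nonempty ∧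
      HittingTimes f U V ⊆ HittingTimes f U1 V1 ∩ HittingTimes f U2 V2 := by
  obtain ⟨m, ⟨_, y, ⟨a, ha, rfl⟩, hay⟩, ⟨_, z, ⟨b, hb, rfl⟩, hbz⟩⟩ :=
    hit_two f hwm hU1 hU2 hV1 hV2 hU1n hU2n hV1n hV2n
  refine ⟨U1 ∩ f^[m] ⁻¹' U2, V1 ∩ f^[m] ⁻¹' V2,
    hU1.inter ((hf.iterate m).isOpen_preimage _ hU2),
    hV1.inter ((hf.iterate m).isOpen_preimage _ hV2),
    ⟨a, ha, hay⟩, ⟨b, hb, hbz⟩, ?_⟩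
  rintro n ⟨hn1, w, ⟨c, ⟨hc1, hc2⟩, rfl⟩, hw1, hw2⟩
  refine ⟨hit_mem f hn1 hc1 hw1, hit_mem f hn1 hc2 ?_⟩
  rw [← Function.Commute.iterate_iterate_self f m n c]
  exact hw2

/-- master pair for finitely many hitting-time sets -/
lemma hit_master (r : ℕ) : ∀ (U V : Fin r → Set X), (∀ i, IsOpen (U i)) →
    (∀ i, IsOpen (V i)) → (∀ i, (U i).Nonempty) → (∀ i, (V i).Nonempty) →
    ∃ U' V' : Set X, IsOpen U' ∧ IsOpen V' ∧ U'.Nonempty ∧ V'.Nonempty ∧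
      ∀ n ∈ HittingTimes f U' V', ∀ i, n ∈ HittingTimes f (U i) (V i) := by
  induction r with
  | zero =>
    exact fun _ _ _ _ _ _ => ⟨univ, univ, isOpen_univ, isOpen_univ, univ_nonempty,
      univ_nonempty, fun n _ i => i.elim0⟩
  | succ k ih =>
    intro U V hUo hVo hUn hVn
    obtain ⟨U', V', hU'o, hV'o, hU'n, hV'n, hsub⟩ :=
      ih (fun i => U i.castSucc) (fun i => V i.castSucc) (fun i => hUo _) (fun i => hVo _)
        (fun i => hUn _) (fun i => hVn _)
    obtain ⟨U'', V'', hU''o, hV''o, hU''n, hV''n, hsub2⟩ :=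
      hit_base f hwm hf hU'o hV'o (hUo (Fin.last k)) (hVo (Fin.last k))
        hU'n hV'n (hUn _) (hVn _)
    refine ⟨U'', V'', hU''o, hV''o, hU''n, hV''n, fun n hn i => ?_⟩
    obtain ⟨h1, h2⟩ := hsub2 hn
    refine Fin.lastCases ?_ (fun j => ?_) i
    · exact h2
    · exact hsub n h1 j

lemma hit_finite (r : ℕ) (U V : Fin r → Set X) (hUo : ∀ i, IsOpen (U i))
    (hVo : ∀ i, IsOpen (V i)) (hUn : ∀ i, (U i).Nonempty) (hVn : ∀ i, (V i).Nonempty) :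
    ∃ n, ∀ i, n ∈ HittingTimes f (U i) (V i) := by
  obtain ⟨U', V', hU'o, hV'o, hU'n, hV'n, hsub⟩ := hit_master f hwm hf r U V hUo hVo hUn hVn
  obtain ⟨n, hn⟩ := hit_nonempty f hwm hU'o hV'o hU'n hV'n
  exact ⟨n, hsub n hn⟩

end Aux

lemma box_subset {X : Type*} [TopologicalSpace X] {n : ℕ} {U : Set (Fin n → X)}
    (hU : IsOpen U) {x : Fin n → X} (hx : x ∈ U) :
    ∃ u : Fin n → Set X, (∀ i, IsOpen (u i)) ∧ (∀ i, x i ∈ u i) ∧ Set.pi univ u ⊆ U := by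
  obtain ⟨I, u, hu, hsub⟩ := isOpen_pi_iff.mp hU x hx
  refine ⟨fun i => if i ∈ I then u i else univ, fun i => ?_, fun i => ?_, fun y hy => ?_⟩
  · dsimp only
    split_ifs with h
    · exact (hu i h).1
    · exact isOpen_univ
  · dsimp only
    split_ifs with h
    · exact (hu i h).2
    · trivial
  · refine hsub fun i hi => ?_
    have := hy i (mem_univ i)
    dsimp only at this
    rwa [if_pos (Finset.mem_coe.mp hi)] at this

theorem weakly_mixing_implies_nfold_transitive
    {X : Type*} [MetricSpace X] [CompactSpace X] (f : X → X) (hf : Continuous f)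
    (hwm : IsTopTransitive (fun p : X × X => (f p.1, f p.2))) :
    ∀ n : ℕ, 1 ≤ n → IsTopTransitive (fun x : Fin n → X => fun i => f (x i)) := by

  intro n hn U V hU hV hUn hVn
  obtain ⟨x, hx⟩ := hUn
  obtain ⟨y, hy⟩ := hVn
  haveI : Nonempty X := ⟨x ⟨0, hn⟩⟩
  obtain ⟨u, huo, hxu, huU⟩ := box_subset hU hx
  obtain ⟨v, hvo, hyv, hvV⟩ := box_subset hV hy
  obtain ⟨m, hm⟩ := hit_finite f hwm hf n u v huo hvo (fun i => ⟨x i, hxu i⟩)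
    (fun i => ⟨y i, hyv i⟩)
  have hm1 : 1 ≤ m := (hm ⟨0, hn⟩).1
  have h2 : ∀ i, ∃ a, a ∈ u i ∧ f^[m] a ∈ v i := by
    intro i
    obtain ⟨_, w, ⟨a, ha, rfl⟩, hwv⟩ := hm i
    exact ⟨a, ha, hwv⟩
  choose a ha hfa using h2
  refine ⟨m, hm1, (fun x : Fin n → X => fun i => f (x i))^[m] a, ⟨a, huU fun i _ => ha i, rfl⟩, ?_⟩
  rw [iter_pi]
  exact hvV fun i _ => hfa i
end

section
/- Let (X,f) be a topological dynamical system and n a positive integer. Then (X,f) is multi-transitive if and only if (X,f^n) is multi-transitive. -/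
open Function Set Filter Topology MeasureTheory

/-- The `k`-th iterate of a product map `x ↦ (f^[a i] (x i))_i` is
`x ↦ (f^[a i * k] (x i))_i`. -/
lemma iter_pi_map {X : Type*} (f : X → X) {r : ℕ} (a : Fin r → ℕ) (k : ℕ) :
    (fun x : Fin r → X => fun i => f^[a i] (x i))^[k]
      = fun x : Fin r → X => fun i => f^[a i * k] (x i) := by
  induction k with
  | zero => funext x; simp
  | succ k ih =>
    funext x i
    rw [Function.iterate_succ_apply']
    simp only [ih]
    rw [← Function.iterate_add_apply]
    congr 1
    ring

theorem multiTrans_iff_iterate_multiTrans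
    {X : Type*} [MetricSpace X] [CompactSpace X] (f : X → X) (hf : Continuous f)
    (n : ℕ) (hn : 1 ≤ n) :
    MultiTrans f ↔ MultiTrans (f^[n]) := by
  constructor
  · intro h r hr U V hU hV hUne hVne
    have hrn : 1 ≤ r * n := Nat.mul_pos hr hn
    -- index map : i-th coordinate of X^r goes to coordinate (i+1)*n - 1 of X^(r*n)
    have hidx : ∀ i : Fin r, (↑i + 1) * n - 1 < r * n := by
      intro i
      have h1 : 1 ≤ (↑i + 1) * n := Nat.mul_pos (Nat.succ_pos _) hn
      have h2 : (↑i + 1) * n ≤ r * n := Nat.mul_le_mul_right n i.isLt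
      omega
    set idx : Fin r → Fin (r * n) := fun i => ⟨(↑i + 1) * n - 1, hidx i⟩ with hidxdef
    have hinj : Function.Injective idx := by
      intro i i' hii
      have hval : (↑i + 1) * n - 1 = (↑i' + 1) * n - 1 := congrArg Fin.val hii
      have h1 : 1 ≤ (↑i + 1) * n := Nat.mul_pos (Nat.succ_pos _) hn
      have h1' : 1 ≤ (↑i' + 1) * n := Nat.mul_pos (Nat.succ_pos _) hn
      have h2 : (↑i + 1) * n = (↑i' + 1) * n := by omega
      have h3 : (↑i : ℕ) + 1 = ↑i' + 1 := Nat.eq_of_mul_eq_mul_right hn h2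
      exact Fin.ext (by omega)
    set π : (Fin (r * n) → X) → (Fin r → X) := fun x i => x (idx i) with hπdef
    have hπcont : Continuous π := continuous_pi fun i => continuous_apply _
    -- π is surjective (preimages of nonempty sets are nonempty)
    obtain ⟨x0, hx0⟩ := hUne
    have hπpre : ∀ u : Fin r → X, ∃ u', π u' = u := by
      intro u
      refine ⟨Function.extend idx u (fun _ => x0 ⟨0, hr⟩), funext fun i => ?_⟩
      exact hinj.extend_apply u _ i
    have hpreNe : ∀ {W : Set (Fin r → X)}, W.Nonempty → (π ⁻¹' W).Nonempty := by
      intro W ⟨w, hw⟩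
      obtain ⟨w', hw'⟩ := hπpre w
      exact ⟨w', by simp [Set.mem_preimage, hw', hw]⟩
    obtain ⟨k, hk, y, ⟨u', hu'U, hFu⟩, hyV⟩ :=
      h (r * n) hrn (π ⁻¹' U) (π ⁻¹' V) (hU.preimage hπcont) (hV.preimage hπcont)
        (hpreNe ⟨x0, hx0⟩) (hpreNe hVne)
    rw [iter_pi_map f (fun j : Fin (r * n) => (↑j : ℕ) + 1) k] at hFu
    refine ⟨k, hk, π y, ⟨π u', hu'U, ?_⟩, hyV⟩
    rw [iter_pi_map (f^[n]) (fun i : Fin r => (↑i : ℕ) + 1) k]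
    funext i
    have hcoord := congrFun hFu (idx i)
    simp only at hcoord
    have hval : (↑(idx i) : ℕ) + 1 = (↑i + 1) * n := by
      have h1 : 1 ≤ (↑i + 1) * n := Nat.mul_pos (Nat.succ_pos _) hn
      simp only [hidxdef]
      omega
    calc (f^[n])^[((↑i : ℕ) + 1) * k] (π u' i)
        = f^[n * (((↑i : ℕ) + 1) * k)] (u' (idx i)) := by
          rw [← Function.iterate_mul]
      _ = f^[((↑(idx i) : ℕ) + 1) * k] (u' (idx i)) := by
          congr 1
          rw [hval]; ring
      _ = y (idx i) := hcoord
  · intro h r hr U V hU hV hUne hVne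
    obtain ⟨k, hk, y, ⟨u, huU, heq⟩, hyV⟩ := h r hr U V hU hV hUne hVne
    refine ⟨n * k, Nat.mul_pos hn hk, y, ⟨u, huU, ?_⟩, hyV⟩
    rw [iter_pi_map (f^[n]) (fun i : Fin r => (↑i : ℕ) + 1) k] at heq
    rw [iter_pi_map f (fun i : Fin r => (↑i : ℕ) + 1) (n * k)]
    funext i
    have hcoord := congrFun heq i
    simp only at hcoord
    calc f^[((↑i : ℕ) + 1) * (n * k)] (u i)
        = f^[n * (((↑i : ℕ) + 1) * k)] (u i) := by congr 1; ring
      _ = (f^[n])^[((↑i : ℕ) + 1) * k] (u i) := by rw [Function.iterate_mul]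
      _ = y i := hcoord
end

section
/- Let (X,f) be a topological dynamical system and n a positive integer. Then (X,f) is strongly multi-transitive if and only if (X,f^n) is strongly multi-transitive. -/
open Function Set Filter Topology MeasureTheory

lemma prod_iterate {X : Type*} (f : X → X) {r : ℕ} (c : Fin r → ℕ) (m : ℕ) :
    (fun x : Fin r → X => fun i => f^[c i] (x i))^[m] =
      fun x : Fin r → X => fun i => f^[m * c i] (x i) := by
  induction m with
  | zero => funext x; simp
  | succ m ih =>
    funext x i
    rw [Function.iterate_succ_apply', ih]
    simp only [← Function.iterate_add_apply, Nat.succ_mul]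
    ring_nf

theorem strongMultiTrans_iff_iterate_strongMultiTrans
    {X : Type*} [MetricSpace X] [CompactSpace X] (f : X → X) (hf : Continuous f)
    (n : ℕ) (hn : 1 ≤ n) :
    StrongMultiTrans f ↔ StrongMultiTrans (f^[n]) := by
  constructor
  · intro h r hr a ha
    have H := h r hr (fun i => n * a i)
      (fun i => Nat.mul_pos hn (ha i))
    unfold MultiTransWrt at H ⊢
    have : (fun x : Fin r → X => fun i => (f^[n])^[a i] (x i)) =
        (fun x : Fin r → X => fun i => f^[n * a i] (x i)) := by
      funext x i; rw [← Function.iterate_mul]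
    rw [this]; exact H
  · intro h r hr a ha
    have H := h r hr a ha
    unfold MultiTransWrt IsTopTransitive at H ⊢
    intro U V hU hV hUne hVne
    obtain ⟨m, hm, hne⟩ := H U V hU hV hUne hVne
    refine ⟨m * n, Nat.mul_pos hm hn, ?_⟩
    have : (fun x : Fin r → X => fun i => (f^[n])^[a i] (x i))^[m] =
        (fun x : Fin r → X => fun i => f^[a i] (x i))^[m * n] := by
      rw [prod_iterate, prod_iterate]
      funext x i
      rw [← Function.iterate_mul]
      ring_nf
    rwa [this] at hne
end

section
/- Let (X,f) be a topological dynamical system and a = (a₁,…,a_r) a vector of positive integers. Then (X,f) is strongly multi-transitive if and only if the product system (X^r, f^{a₁} × f^{a₂} × ⋯ × f^{a_r}) is strongly multi-transitive. -/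
open Function Set Filter Topology MeasureTheory

lemma pi_iter {X : Type*} {I : Type*} (f : X → X) (d : I → ℕ) :
    ∀ n : ℕ, (fun x : I → X => fun i => f^[d i] (x i))^[n] = fun x i => f^[n * d i] (x i)
  | 0 => by funext x i; simp
  | n+1 => by
      funext x i
      rw [Function.iterate_succ_apply, pi_iter f d n]
      show f^[n * d i] (f^[d i] (x i)) = f^[(n+1) * d i] (x i)
      rw [← Function.iterate_add_apply, Nat.succ_mul]

lemma transfer_trans {X Y : Type*} [TopologicalSpace X] [TopologicalSpace Y]
    {F : X → X} {G : Y → Y} {π : X → Y} (hc : Continuous π) (hs : Surjective π)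
    (hsemi : Function.Semiconj π F G) (h : IsTopTransitive F) : IsTopTransitive G := by
  intro U V hU hV hUne hVne
  obtain ⟨u, hu⟩ := hUne; obtain ⟨v, hv⟩ := hVne
  obtain ⟨x, hx⟩ := hs u; obtain ⟨y, hy⟩ := hs v
  obtain ⟨n, hn, z, ⟨w, hwU, hwz⟩, hzV⟩ :=
    h (π ⁻¹' U) (π ⁻¹' V) (hU.preimage hc) (hV.preimage hc)
      ⟨x, by simp [hx, hu]⟩ ⟨y, by simp [hy, hv]⟩
  refine ⟨n, hn, π z, ⟨π w, hwU, ?_⟩, hzV⟩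
  rw [← hwz]
  exact ((hsemi.iterate_right n) w).symm

theorem strongMultiTrans_iff_product_strongMultiTrans
    {X : Type*} [MetricSpace X] [CompactSpace X] (f : X → X) (hf : Continuous f)
    (r : ℕ) (hr : 1 ≤ r) (a : Fin r → ℕ) (ha : ∀ i, 1 ≤ a i) :
    StrongMultiTrans f ↔
      StrongMultiTrans (fun x : Fin r → X => fun i => f^[a i] (x i)) := by
  constructor
  · -- forward
    intro h s hs b hb
    unfold MultiTransWrt
    -- the product map on (Fin s → Fin r → X)
    set e : Fin (s * r) ≃ Fin s × Fin r := finProdFinEquiv.symm with he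
    have hd : ∀ p : Fin (s * r), 1 ≤ b (e p).1 * a (e p).2 := fun p =>
      Nat.one_le_iff_ne_zero.mpr (Nat.mul_ne_zero
        (Nat.one_le_iff_ne_zero.mp (hb _)) (Nat.one_le_iff_ne_zero.mp (ha _)))
    have hF := h (s * r) (Nat.one_le_iff_ne_zero.mpr
        (Nat.mul_ne_zero (Nat.one_le_iff_ne_zero.mp hs) (Nat.one_le_iff_ne_zero.mp hr)))
      (fun p => b (e p).1 * a (e p).2) hd
    unfold MultiTransWrt at hF
    refine transfer_trans (π := fun y : Fin (s * r) → X =>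
        fun j i => y (finProdFinEquiv (j, i))) ?_ ?_ ?_ hF
    · exact continuous_pi fun j => continuous_pi fun i => continuous_apply _
    · intro z
      refine ⟨fun p => z (e p).1 (e p).2, ?_⟩
      funext j i
      simp [he]
    · intro y
      funext j i
      show f^[b (e (finProdFinEquiv (j, i))).1 * a (e (finProdFinEquiv (j, i))).2]
          (y (finProdFinEquiv (j, i)))
        = (fun x : Fin r → X => fun i => f^[a i] (x i))^[b j] (fun i => y (finProdFinEquiv (j, i))) i
      rw [pi_iter]
      simp [he]
  · -- backward
    intro h k hk c hc
    unfold MultiTransWrt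
    have hG := h k hk c hc
    unfold MultiTransWrt at hG
    set i₀ : Fin r := ⟨0, hr⟩ with hi₀
    set m : ℕ := a i₀ with hm
    -- project onto the i₀ coordinate
    have hF' : IsTopTransitive (fun x : Fin k → X => fun j => f^[m * c j] (x j)) := by
      refine transfer_trans (π := fun x : Fin k → Fin r → X => fun j => x j i₀) ?_ ?_ ?_ hG
      · exact continuous_pi fun j => (continuous_apply i₀).comp (continuous_apply j)
      · exact fun z => ⟨fun j _ => z j, rfl⟩
      · intro x
        funext j
        show (fun y : Fin r → X => fun i => f^[a i] (y i))^[c j] (x j) i₀ = f^[m * c j] (x j i₀)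
        rw [pi_iter]
        simp [hm, Nat.mul_comm]
    intro U V hU hV hUne hVne
    obtain ⟨n, hn, z, hz⟩ := hF' U V hU hV hUne hVne
    refine ⟨n * m, Nat.one_le_iff_ne_zero.mpr (Nat.mul_ne_zero
      (Nat.one_le_iff_ne_zero.mp hn) (Nat.one_le_iff_ne_zero.mp (ha i₀))), z, ?_, hz.2⟩
    obtain ⟨w, hwU, hwz⟩ := hz.1
    refine ⟨w, hwU, ?_⟩
    rw [← hwz, pi_iter, pi_iter]
    funext j
    simp [Nat.mul_assoc]
end

section
/- Let (X,f) be a topological dynamical system. Then (X,f) is strongly multi-transitive if and only if for every positive integer k the system (X^k, f × f² × ⋯ × f^k) is weakly mixing. -/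
open Function Set Filter Topology MeasureTheory

section Aux

variable {X : Type*} [TopologicalSpace X] {f : X → X}

lemma pi_iterate {r : ℕ} (a : Fin r → ℕ) (n : ℕ) (x : Fin r → X) :
    (fun x : Fin r → X => fun i => f^[a i] (x i))^[n] x = fun i => f^[a i * n] (x i) := by
  induction n with
  | zero => simp
  | succ n ih =>
    rw [Function.iterate_succ_apply', ih]
    funext i
    simp only []
    rw [Nat.mul_succ, Nat.add_comm, Function.iterate_add_apply]

lemma pair_iterate {k : ℕ} (n : ℕ) (p : (Fin k → X) × (Fin k → X)) :
    (fun p : (Fin k → X) × (Fin k → X) =>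
        ((fun i => f^[(i : ℕ) + 1] (p.1 i)), (fun i => f^[(i : ℕ) + 1] (p.2 i))))^[n] p =
      ((fun i : Fin k => f^[((i : ℕ) + 1) * n] (p.1 i)),
        (fun i : Fin k => f^[((i : ℕ) + 1) * n] (p.2 i))) := by
  induction n with
  | zero => simp
  | succ n ih =>
    rw [Function.iterate_succ_apply', ih]
    refine Prod.ext ?_ ?_ <;> funext i <;>
      (simp only [← Function.iterate_add_apply]; congr 1; ring)

lemma exists_box {k : ℕ} {W : Set (Fin k → X)} (hW : IsOpen W) {x : Fin k → X} (hx : x ∈ W) :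
    ∃ u : Fin k → Set X, (∀ i, IsOpen (u i)) ∧ (∀ i, x i ∈ u i) ∧ Set.pi Set.univ u ⊆ W := by
  obtain ⟨I, u, h1, h2⟩ := isOpen_pi_iff.mp hW x hx
  refine ⟨fun i => if h : i ∈ I then u i else Set.univ, fun i => ?_, fun i => ?_, fun y hy => ?_⟩
  · by_cases h : i ∈ I <;> simp [h]
    exact (h1 i h).1
  · by_cases h : i ∈ I <;> simp [h]
    exact (h1 i h).2
  · apply h2
    intro i hi
    have := hy i (Set.mem_univ i)
    simpa [Finset.mem_coe.mp hi] using this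


lemma box_of_multiTransWrt {r : ℕ} {a : Fin r → ℕ} (h : MultiTransWrt f a)
    (U V : Fin r → Set X) (hUo : ∀ i, IsOpen (U i)) (hVo : ∀ i, IsOpen (V i))
    (hUne : ∀ i, (U i).Nonempty) (hVne : ∀ i, (V i).Nonempty) :
    ∃ n, 1 ≤ n ∧ ∀ i, (f^[a i * n] '' U i ∩ V i).Nonempty := by
  obtain ⟨n, hn, y, ⟨x, hx, rfl⟩, hy⟩ :=
    h (Set.pi Set.univ U) (Set.pi Set.univ V)
      (isOpen_set_pi Set.finite_univ fun i _ => hUo i)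
      (isOpen_set_pi Set.finite_univ fun i _ => hVo i)
      (Set.univ_pi_nonempty_iff.mpr hUne) (Set.univ_pi_nonempty_iff.mpr hVne)
  refine ⟨n, hn, fun i => ⟨f^[a i * n] (x i), ⟨x i, hx i (Set.mem_univ i), rfl⟩, ?_⟩⟩
  have := hy i (Set.mem_univ i)
  rwa [pi_iterate] at this

lemma multiTransWrt_of_box {r : ℕ} {a : Fin r → ℕ}
    (h : ∀ U V : Fin r → Set X, (∀ i, IsOpen (U i)) → (∀ i, IsOpen (V i)) →
      (∀ i, (U i).Nonempty) → (∀ i, (V i).Nonempty) →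
      ∃ n, 1 ≤ n ∧ ∀ i, (f^[a i * n] '' U i ∩ V i).Nonempty) :
    MultiTransWrt f a := by
  intro U V hU hV ⟨x, hx⟩ ⟨y, hy⟩
  obtain ⟨u, huo, hxu, huU⟩ := exists_box hU hx
  obtain ⟨v, hvo, hyv, hvV⟩ := exists_box hV hy
  obtain ⟨n, hn, hhit⟩ := h u v huo hvo (fun i => ⟨x i, hxu i⟩) (fun i => ⟨y i, hyv i⟩)
  have hex : ∀ i, ∃ w, w ∈ u i ∧ f^[a i * n] w ∈ v i := by
    intro i
    obtain ⟨p, ⟨w, hw, rfl⟩, hp⟩ := hhit i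
    exact ⟨w, hw, hp⟩
  choose w hw1 hw2 using hex
  exact ⟨n, hn, (fun i => f^[a i * n] (w i)), ⟨w, huU fun i _ => hw1 i, by rw [pi_iterate]⟩,
    hvV fun i _ => hw2 i⟩


def Njset (f : X → X) (j : ℕ) (U V : Set X) : Set ℕ :=
  {n | 1 ≤ n ∧ (f^[j * n] '' U ∩ V).Nonempty}

def HypK (f : X → X) (k : ℕ) : Prop :=
  ∀ A B C D : Fin k → Set X, (∀ j, IsOpen (A j)) → (∀ j, IsOpen (B j)) →
    (∀ j, IsOpen (C j)) → (∀ j, IsOpen (D j)) →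
    (∀ j, (A j).Nonempty) → (∀ j, (B j).Nonempty) →
    (∀ j, (C j).Nonempty) → (∀ j, (D j).Nonempty) →
    ∃ n, 1 ≤ n ∧ ∀ j : Fin k,
      (f^[((j : ℕ) + 1) * n] '' A j ∩ C j).Nonempty ∧
      (f^[((j : ℕ) + 1) * n] '' B j ∩ D j).Nonempty

def GoodSet (f : X → X) (k : ℕ) (S : Set ℕ) : Prop :=
  ∃ U V : Fin k → Set X, (∀ j, IsOpen (U j)) ∧ (∀ j, IsOpen (V j)) ∧
    (∀ j, (U j).Nonempty) ∧ (∀ j, (V j).Nonempty) ∧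
    (⋂ j : Fin k, Njset f ((j : ℕ) + 1) (U j) (V j)) ⊆ S

lemma goodSet_nonempty {k : ℕ} (hH : HypK f k) {S : Set ℕ} (hS : GoodSet f k S) :
    S.Nonempty := by
  obtain ⟨U, V, hUo, hVo, hUne, hVne, hsub⟩ := hS
  obtain ⟨n, hn, hj⟩ := hH U U V V hUo hUo hVo hVo hUne hUne hVne hVne
  exact ⟨n, hsub (Set.mem_iInter.mpr fun j => ⟨hn, (hj j).1⟩)⟩

lemma goodSet_inter (hf : Continuous f) {k : ℕ} (hH : HypK f k) {S T : Set ℕ}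
    (hS : GoodSet f k S) (hT : GoodSet f k T) : GoodSet f k (S ∩ T) := by
  obtain ⟨A, B, hAo, hBo, hAne, hBne, hA⟩ := hS
  obtain ⟨C, D, hCo, hDo, hCne, hDne, hC⟩ := hT
  obtain ⟨n, hn, hj⟩ := hH A B C D hAo hBo hCo hDo hAne hBne hCne hDne
  refine ⟨fun j => A j ∩ f^[((j : ℕ) + 1) * n] ⁻¹' C j,
    fun j => B j ∩ f^[((j : ℕ) + 1) * n] ⁻¹' D j,
    fun j => (hAo j).inter ((hCo j).preimage (hf.iterate _)),
    fun j => (hBo j).inter ((hDo j).preimage (hf.iterate _)),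
    fun j => ?_, fun j => ?_, fun m hm => ⟨hA (Set.mem_iInter.mpr fun j => ?_),
      hC (Set.mem_iInter.mpr fun j => ?_)⟩⟩
  · obtain ⟨p, ⟨x, hx, rfl⟩, hp⟩ := (hj j).1
    exact ⟨x, hx, hp⟩
  · obtain ⟨p, ⟨x, hx, rfl⟩, hp⟩ := (hj j).2
    exact ⟨x, hx, hp⟩
  · obtain ⟨hm1, p, ⟨x, hxE, rfl⟩, hpF⟩ := Set.mem_iInter.mp hm j
    exact ⟨hm1, ⟨f^[((j : ℕ) + 1) * m] x, ⟨x, hxE.1, rfl⟩, hpF.1⟩⟩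
  · obtain ⟨hm1, p, ⟨x, hxE, rfl⟩, hpF⟩ := Set.mem_iInter.mp hm j
    refine ⟨hm1, ⟨f^[((j : ℕ) + 1) * m] (f^[((j : ℕ) + 1) * n] x),
      ⟨f^[((j : ℕ) + 1) * n] x, hxE.2, rfl⟩, ?_⟩⟩
    rw [← Function.iterate_add_apply, Nat.add_comm, Function.iterate_add_apply]
    exact hpF.2

lemma goodSet_single {k j0 : ℕ} (hX : Nonempty X) (h1 : 1 ≤ j0) (h2 : j0 ≤ k)
    {U V : Set X} (hU : IsOpen U) (hV : IsOpen V) (hUne : U.Nonempty) (hVne : V.Nonempty) :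
    GoodSet f k (Njset f j0 U V) := by
  have hlt : j0 - 1 < k := by omega
  refine ⟨fun j => if (j : ℕ) + 1 = j0 then U else Set.univ,
    fun j => if (j : ℕ) + 1 = j0 then V else Set.univ,
    fun j => ?_, fun j => ?_, fun j => ?_, fun j => ?_, fun m hm => ?_⟩
  · show IsOpen (if (j : ℕ) + 1 = j0 then U else Set.univ)
    split <;> [exact hU; exact isOpen_univ]
  · show IsOpen (if (j : ℕ) + 1 = j0 then V else Set.univ)
    split <;> [exact hV; exact isOpen_univ]
  · show (if (j : ℕ) + 1 = j0 then U else Set.univ).Nonempty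
    split <;> [exact hUne; exact ⟨hX.some, trivial⟩]
  · show (if (j : ℕ) + 1 = j0 then V else Set.univ).Nonempty
    split <;> [exact hVne; exact ⟨hX.some, trivial⟩]
  · have hthis := Set.mem_iInter.mp hm ⟨j0 - 1, hlt⟩
    have hv : ((⟨j0 - 1, hlt⟩ : Fin k) : ℕ) + 1 = j0 := by
      show j0 - 1 + 1 = j0; omega
    simpa [hv] using hthis


lemma hypK_of_doubled {k : ℕ}
    (hT : IsTopTransitive (fun p : (Fin k → X) × (Fin k → X) =>
      ((fun i => f^[(i : ℕ) + 1] (p.1 i)), (fun i => f^[(i : ℕ) + 1] (p.2 i))))) :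
    HypK f k := by
  intro A B C D hAo hBo hCo hDo hAne hBne hCne hDne
  obtain ⟨n, hn, q, ⟨p, hp, rfl⟩, hq⟩ :=
    hT ((Set.pi Set.univ A) ×ˢ (Set.pi Set.univ B)) ((Set.pi Set.univ C) ×ˢ (Set.pi Set.univ D))
      ((isOpen_set_pi Set.finite_univ fun i _ => hAo i).prod
        (isOpen_set_pi Set.finite_univ fun i _ => hBo i))
      ((isOpen_set_pi Set.finite_univ fun i _ => hCo i).prod
        (isOpen_set_pi Set.finite_univ fun i _ => hDo i))
      ((Set.univ_pi_nonempty_iff.mpr hAne).prod (Set.univ_pi_nonempty_iff.mpr hBne))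
      ((Set.univ_pi_nonempty_iff.mpr hCne).prod (Set.univ_pi_nonempty_iff.mpr hDne))
  rw [pair_iterate] at hq
  obtain ⟨hq1, hq2⟩ := hq
  obtain ⟨hp1, hp2⟩ := hp
  refine ⟨n, hn, fun j =>
    ⟨⟨f^[((j : ℕ) + 1) * n] (p.1 j), ⟨p.1 j, hp1 j (Set.mem_univ j), rfl⟩, hq1 j (Set.mem_univ j)⟩,
     ⟨f^[((j : ℕ) + 1) * n] (p.2 j), ⟨p.2 j, hp2 j (Set.mem_univ j), rfl⟩, hq2 j (Set.mem_univ j)⟩⟩⟩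

lemma smt_of_doubled (hf : Continuous f)
    (H : ∀ k : ℕ, 1 ≤ k →
      IsTopTransitive (fun p : (Fin k → X) × (Fin k → X) =>
        ((fun i => f^[(i : ℕ) + 1] (p.1 i)), (fun i => f^[(i : ℕ) + 1] (p.2 i))))) :
    StrongMultiTrans f := by
  intro r hr a ha
  apply multiTransWrt_of_box
  intro U V hUo hVo hUne hVne
  have hX : Nonempty X := ⟨(hUne ⟨0, hr⟩).some⟩
  classical
  set k := Finset.univ.sup a with hkdef
  have hk1 : 1 ≤ k := le_trans (ha ⟨0, hr⟩) (Finset.le_sup (Finset.mem_univ _))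
  have hak : ∀ i, a i ≤ k := fun i => Finset.le_sup (Finset.mem_univ i)
  have hH : HypK f k := hypK_of_doubled (H k hk1)
  have key : ∀ s : Finset (Fin r), s.Nonempty →
      GoodSet f k (⋂ i ∈ s, Njset f (a i) (U i) (V i)) := by
    intro s
    induction s using Finset.induction_on with
    | empty => intro hs; exact absurd hs (by simp)
    | @insert i s hi ih =>
      intro _
      rw [Finset.set_biInter_insert]
      rcases s.eq_empty_or_nonempty with rfl | hs'
      · simpa using goodSet_single hX (ha i) (hak i) (hUo i) (hVo i) (hUne i) (hVne i)
      · exact goodSet_inter hf hH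
          (goodSet_single hX (ha i) (hak i) (hUo i) (hVo i) (hUne i) (hVne i)) (ih hs')
  obtain ⟨n, hn⟩ := goodSet_nonempty hH (key Finset.univ ⟨⟨0, hr⟩, Finset.mem_univ _⟩)
  have hn' : ∀ i, n ∈ Njset f (a i) (U i) (V i) := by
    intro i
    have := Set.mem_iInter₂.mp hn i (Finset.mem_univ i)
    exact this
  exact ⟨n, (hn' ⟨0, hr⟩).1, fun i => (hn' i).2⟩

lemma doubled_of_smt (h : StrongMultiTrans f) {k : ℕ} (hk : 1 ≤ k) :
    IsTopTransitive (fun p : (Fin k → X) × (Fin k → X) =>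
      ((fun i => f^[(i : ℕ) + 1] (p.1 i)), (fun i => f^[(i : ℕ) + 1] (p.2 i)))) := by
  rintro U V hU hV ⟨u0, hu0⟩ ⟨v0, hv0⟩
  obtain ⟨s1, s2, hs1, hs2, hu1, hu2, hsU⟩ := isOpen_prod_iff.mp hU u0.1 u0.2 hu0
  obtain ⟨t1, t2, ht1, ht2, hv1, hv2, htV⟩ := isOpen_prod_iff.mp hV v0.1 v0.2 hv0
  obtain ⟨A1, hA1o, hA1m, hA1s⟩ := exists_box hs1 hu1
  obtain ⟨A2, hA2o, hA2m, hA2s⟩ := exists_box hs2 hu2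
  obtain ⟨B1, hB1o, hB1m, hB1s⟩ := exists_box ht1 hv1
  obtain ⟨B2, hB2o, hB2m, hB2s⟩ := exists_box ht2 hv2
  classical
  set a : Fin (k + k) → ℕ := fun i => if (i : ℕ) < k then (i : ℕ) + 1 else (i : ℕ) - k + 1
    with hadef
  have ha : ∀ i, 1 ≤ a i := by
    intro i; simp only [hadef]; split <;> omega
  obtain ⟨n, hn, hhit⟩ := box_of_multiTransWrt (h (k + k) (by omega) a ha)
    (fun i => if hik : (i : ℕ) < k then A1 ⟨i, hik⟩
      else A2 ⟨(i : ℕ) - k, by have := i.isLt; omega⟩)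
    (fun i => if hik : (i : ℕ) < k then B1 ⟨i, hik⟩
      else B2 ⟨(i : ℕ) - k, by have := i.isLt; omega⟩)
    (fun i => by split <;> [exact hA1o _; exact hA2o _])
    (fun i => by split <;> [exact hB1o _; exact hB2o _])
    (fun i => by split <;> [exact ⟨_, hA1m _⟩; exact ⟨_, hA2m _⟩])
    (fun i => by split <;> [exact ⟨_, hB1m _⟩; exact ⟨_, hB2m _⟩])
  have e1 : ∀ j : Fin k, (f^[((j : ℕ) + 1) * n] '' A1 j ∩ B1 j).Nonempty := by
    intro j
    have hjk : (j : ℕ) < k + k := by have := j.isLt; omega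
    have := hhit ⟨(j : ℕ), hjk⟩
    have hlt : ((⟨(j : ℕ), hjk⟩ : Fin (k + k)) : ℕ) < k := j.isLt
    simpa [hadef, dif_pos hlt, if_pos hlt] using this
  have e2 : ∀ j : Fin k, (f^[((j : ℕ) + 1) * n] '' A2 j ∩ B2 j).Nonempty := by
    intro j
    have hjk : k + (j : ℕ) < k + k := by have := j.isLt; omega
    have := hhit ⟨k + (j : ℕ), hjk⟩
    have hnlt : ¬ ((⟨k + (j : ℕ), hjk⟩ : Fin (k + k)) : ℕ) < k := by
      show ¬ k + (j : ℕ) < k; omega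
    have hsub : k + (j : ℕ) - k = (j : ℕ) := by omega
    simpa [hadef, dif_neg hnlt, if_neg hnlt, hsub] using this
  have ex1 : ∀ j : Fin k, ∃ x, x ∈ A1 j ∧ f^[((j : ℕ) + 1) * n] x ∈ B1 j := by
    intro j; obtain ⟨p, ⟨x, hx, rfl⟩, hp⟩ := e1 j; exact ⟨x, hx, hp⟩
  have ex2 : ∀ j : Fin k, ∃ x, x ∈ A2 j ∧ f^[((j : ℕ) + 1) * n] x ∈ B2 j := by
    intro j; obtain ⟨p, ⟨x, hx, rfl⟩, hp⟩ := e2 j; exact ⟨x, hx, hp⟩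
  choose x1 hx1 hx1' using ex1
  choose x2 hx2 hx2' using ex2
  refine ⟨n, hn, _, ⟨(x1, x2), hsU ⟨hA1s fun j _ => hx1 j, hA2s fun j _ => hx2 j⟩, rfl⟩, ?_⟩
  rw [pair_iterate]
  exact htV ⟨hB1s fun j _ => hx1' j, hB2s fun j _ => hx2' j⟩

end Aux


theorem strongMultiTrans_iff_products_weaklyMixing
    {X : Type*} [MetricSpace X] [CompactSpace X] (f : X → X) (hf : Continuous f) :
    StrongMultiTrans f ↔
      ∀ k : ℕ, 1 ≤ k →
        IsTopTransitive (fun p : (Fin k → X) × (Fin k → X) =>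
          ((fun i => f^[(i : ℕ) + 1] (p.1 i)), (fun i => f^[(i : ℕ) + 1] (p.2 i)))) := by
  constructor
  · intro h k hk
    exact doubled_of_smt h hk
  · intro H
    exact smt_of_doubled hf H
end

section
/- Let (X,f) be a topological dynamical system. Then (X,f) is strongly multi-transitive if and only if (X,f) is weakly mixing and multi-transitive. -/
open Function Set Filter Topology MeasureTheory

/-! ### Auxiliary lemmas -/

lemma aux_pi_iterate {ι X : Type*} (F : ι → X → X) (n : ℕ) (x : ι → X) :
    (fun x : ι → X => fun i => F i (x i))^[n] x = fun i => (F i)^[n] (x i) := by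
  induction n with
  | zero => rfl
  | succ n ih =>
    rw [Function.iterate_succ_apply', ih]
    funext i
    rw [Function.iterate_succ_apply']

lemma aux_prod_iterate {X : Type*} (f : X → X) (n : ℕ) (p : X × X) :
    (fun p : X × X => (f p.1, f p.2))^[n] p = (f^[n] p.1, f^[n] p.2) := by
  induction n generalizing p with
  | zero => rfl
  | succ n ih =>
    rw [Function.iterate_succ_apply, ih]
    simp [Function.iterate_succ_apply]

lemma aux_trans_conj {Y Z : Type*} [TopologicalSpace Y] [TopologicalSpace Z]
    (e : Y → Z) (he : Continuous e) (hsurj : Function.Surjective e)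
    (g : Y → Y) (g' : Z → Z) (hcomm : ∀ y, e (g y) = g' (e y))
    (h : IsTopTransitive g) : IsTopTransitive g' := by
  intro U V hU hV hUne hVne
  obtain ⟨u, hu⟩ := hUne
  obtain ⟨v, hv⟩ := hVne
  obtain ⟨u', rfl⟩ := hsurj u
  obtain ⟨v', rfl⟩ := hsurj v
  obtain ⟨n, hn, y, ⟨w, hwU, rfl⟩, hyV⟩ :=
    h (e ⁻¹' U) (e ⁻¹' V) (hU.preimage he) (hV.preimage he) ⟨u', hu⟩ ⟨v', hv⟩
  have hsemi : Function.Semiconj e g g' := hcomm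
  refine ⟨n, hn, e (g^[n] w), ⟨e w, hwU, ?_⟩, hyV⟩
  exact ((hsemi.iterate_right n) w).symm

lemma aux_hitting_mono {X : Type*} [TopologicalSpace X] (f : X → X)
    {U U' V V' : Set X} (hU : U ⊆ U') (hV : V ⊆ V') :
    HittingTimes f U V ⊆ HittingTimes f U' V' := by
  rintro n ⟨hn, x, hx1, hx2⟩
  exact ⟨hn, x, Set.image_mono hU hx1, hV hx2⟩

/-- Furstenberg's intersection trick for weakly mixing systems. -/
lemma aux_wm_pair {X : Type*} [TopologicalSpace X] (f : X → X) (hf : Continuous f)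
    (hwm : IsTopTransitive (fun p : X × X => (f p.1, f p.2)))
    (U₁ V₁ U₂ V₂ : Set X) (hU₁ : IsOpen U₁) (hV₁ : IsOpen V₁) (hU₂ : IsOpen U₂)
    (hV₂ : IsOpen V₂) (hU₁n : U₁.Nonempty) (hV₁n : V₁.Nonempty) (hU₂n : U₂.Nonempty)
    (hV₂n : V₂.Nonempty) :
    ∃ U V : Set X, IsOpen U ∧ IsOpen V ∧ U.Nonempty ∧ V.Nonempty ∧ U ⊆ U₁ ∧ V ⊆ V₁ ∧
      HittingTimes f U V ⊆ HittingTimes f U₂ V₂ := by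
  obtain ⟨n, hn, p, ⟨q, hq, rfl⟩, hp2⟩ :=
    hwm (U₁ ×ˢ V₁) (U₂ ×ˢ V₂) (hU₁.prod hV₁) (hU₂.prod hV₂) (hU₁n.prod hV₁n)
      (hU₂n.prod hV₂n)
  rw [aux_prod_iterate] at hp2
  refine ⟨U₁ ∩ f^[n] ⁻¹' U₂, V₁ ∩ f^[n] ⁻¹' V₂,
    hU₁.inter (hU₂.preimage (hf.iterate n)), hV₁.inter (hV₂.preimage (hf.iterate n)),
    ⟨q.1, hq.1, hp2.1⟩, ⟨q.2, hq.2, hp2.2⟩, Set.inter_subset_left, Set.inter_subset_left, ?_⟩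
  rintro m ⟨hm, z, ⟨w, ⟨hwU₁, hwU₂⟩, rfl⟩, hzV₁, hzV₂⟩
  refine ⟨hm, f^[m] (f^[n] w), ⟨f^[n] w, hwU₂, rfl⟩, ?_⟩
  have : f^[m] (f^[n] w) = f^[n] (f^[m] w) := by
    rw [← Function.iterate_add_apply, ← Function.iterate_add_apply, Nat.add_comm]
  rw [this]
  exact hzV₂

/-- Combining finitely many pairs of open sets in a weakly mixing system. -/
lemma aux_combine {X : Type*} [TopologicalSpace X] (f : X → X) (hf : Continuous f)
    (hwm : IsTopTransitive (fun p : X × X => (f p.1, f p.2))) (hX : Nonempty X)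
    {ι : Type*} [DecidableEq ι] (s : Finset ι) (U V : ι → Set X)
    (hU : ∀ i ∈ s, IsOpen (U i)) (hV : ∀ i ∈ s, IsOpen (V i))
    (hUn : ∀ i ∈ s, (U i).Nonempty) (hVn : ∀ i ∈ s, (V i).Nonempty) :
    ∃ A B : Set X, IsOpen A ∧ IsOpen B ∧ A.Nonempty ∧ B.Nonempty ∧
      ∀ i ∈ s, HittingTimes f A B ⊆ HittingTimes f (U i) (V i) := by
  classical
  induction s using Finset.induction with
  | empty =>
    exact ⟨Set.univ, Set.univ, isOpen_univ, isOpen_univ, Set.univ_nonempty,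
      Set.univ_nonempty, by simp⟩
  | @insert i s hi ih =>
    obtain ⟨A₁, B₁, hA₁, hB₁, hA₁n, hB₁n, hsub⟩ :=
      ih (fun j hj => hU j (Finset.mem_insert_of_mem hj))
        (fun j hj => hV j (Finset.mem_insert_of_mem hj))
        (fun j hj => hUn j (Finset.mem_insert_of_mem hj))
        (fun j hj => hVn j (Finset.mem_insert_of_mem hj))
    obtain ⟨A, B, hA, hB, hAn, hBn, hAA₁, hBB₁, hABi⟩ :=
      aux_wm_pair f hf hwm A₁ B₁ (U i) (V i) hA₁ hB₁
        (hU i (Finset.mem_insert_self i s)) (hV i (Finset.mem_insert_self i s))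
        hA₁n hB₁n (hUn i (Finset.mem_insert_self i s)) (hVn i (Finset.mem_insert_self i s))
    refine ⟨A, B, hA, hB, hAn, hBn, ?_⟩
    intro j hj
    rcases Finset.mem_insert.mp hj with rfl | hj'
    · exact hABi
    · exact (aux_hitting_mono f hAA₁ hBB₁).trans (hsub j hj')

/-- Find a basic open box inside an open set of a finite product. -/
lemma aux_box {X : Type*} [TopologicalSpace X] {r : ℕ} {W : Set (Fin r → X)}
    (hW : IsOpen W) {x : Fin r → X} (hx : x ∈ W) :
    ∃ U : Fin r → Set X, (∀ i, IsOpen (U i)) ∧ (∀ i, x i ∈ U i) ∧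
      Set.pi Set.univ U ⊆ W := by
  classical
  obtain ⟨I, u, hu, hsub⟩ := isOpen_pi_iff.mp hW x hx
  refine ⟨fun i => if i ∈ I then u i else Set.univ, ?_, ?_, ?_⟩
  · intro i
    by_cases h : i ∈ I <;> simp [h, (hu i · |>.1)]
  · intro i
    by_cases h : i ∈ I <;> simp [h, (hu i · |>.2)]
  · intro z hz
    apply hsub
    intro i hi
    have hi' : i ∈ I := hi
    have := hz i (Set.mem_univ i)
    simpa [hi'] using this

theorem strongMultiTrans_iff_weaklyMixing_and_multiTrans
    {X : Type*} [MetricSpace X] [CompactSpace X] (f : X → X) (hf : Continuous f) :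
    StrongMultiTrans f ↔
      IsTopTransitive (fun p : X × X => (f p.1, f p.2)) ∧ MultiTrans f := by
  constructor
  · intro hs
    constructor
    · -- weak mixing from the vector (1,1)
      have h2 := hs 2 (by norm_num) (fun _ => 1) (fun _ => le_refl 1)
      refine aux_trans_conj (fun x : Fin 2 → X => (x 0, x 1))
        ((continuous_apply 0).prodMk (continuous_apply 1))
        (fun p => ⟨![p.1, p.2], by simp⟩) _ _ (fun y => by simp) h2
    · intro n hn
      exact hs n hn _ (fun i => Nat.le_add_left 1 i)
  · rintro ⟨hwm, hmt⟩
    intro r hr a ha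
    intro W W' hW hW' hWn hW'n
    obtain ⟨x, hx⟩ := hWn
    obtain ⟨y, hy⟩ := hW'n
    obtain ⟨U, hUo, hxU, hUW⟩ := aux_box hW hx
    obtain ⟨V, hVo, hyV, hVW'⟩ := aux_box hW' hy
    have hX : Nonempty X := ⟨x ⟨0, hr⟩⟩
    -- m bounds all entries of a
    set m : ℕ := Finset.univ.sup a with hm
    have ham : ∀ i, a i ≤ m := fun i => Finset.le_sup (Finset.mem_univ i)
    have hm1 : 1 ≤ m := le_trans (ha ⟨0, hr⟩) (ham ⟨0, hr⟩)
    -- combine pairs with equal exponent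
    have hcomb : ∀ j : Fin m, ∃ A B : Set X, IsOpen A ∧ IsOpen B ∧ A.Nonempty ∧
        B.Nonempty ∧ ∀ i : Fin r, a i = (j : ℕ) + 1 →
          HittingTimes f A B ⊆ HittingTimes f (U i) (V i) := by
      intro j
      classical
      obtain ⟨A, B, h1, h2, h3, h4, h5⟩ :=
        aux_combine f hf hwm hX (Finset.univ.filter (fun i => a i = (j : ℕ) + 1)) U V
          (fun i _ => hUo i) (fun i _ => hVo i) (fun i _ => ⟨x i, hxU i⟩)
          (fun i _ => ⟨y i, hyV i⟩)
      exact ⟨A, B, h1, h2, h3, h4, fun i hij =>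
        h5 i (Finset.mem_filter.mpr ⟨Finset.mem_univ i, hij⟩)⟩
    choose A B hAo hBo hAn hBn hAB using hcomb
    -- apply multi-transitivity with respect to (1, 2, …, m)
    obtain ⟨n, hn, z, ⟨w, hwA, rfl⟩, hzB⟩ :=
      hmt m hm1 (Set.pi Set.univ A) (Set.pi Set.univ B)
        (isOpen_set_pi Set.finite_univ (fun j _ => hAo j))
        (isOpen_set_pi Set.finite_univ (fun j _ => hBo j))
        (Set.univ_pi_nonempty_iff.mpr hAn) (Set.univ_pi_nonempty_iff.mpr hBn)
    rw [aux_pi_iterate] at hzB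
    -- every a i * n is a hitting time for (U i, V i)
    have key : ∀ i : Fin r, a i * n ∈ HittingTimes f (U i) (V i) := by
      intro i
      have hai : 1 ≤ a i := ha i
      have hjlt : a i - 1 < m := by
        have := ham i; omega
      set j : Fin m := ⟨a i - 1, hjlt⟩ with hj
      have hji : a i = (j : ℕ) + 1 := by simp [hj]; omega
      apply hAB j i hji
      have h1 : ((j : ℕ) + 1) * n = a i * n := by rw [← hji]
      refine ⟨Nat.mul_pos hai hn, (f^[(j : ℕ) + 1])^[n] (w j), ⟨w j, hwA j (Set.mem_univ j), ?_⟩,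
        ?_⟩
      · rw [← Function.iterate_mul, h1]
      · exact hzB j (Set.mem_univ j)
    have key' : ∀ i : Fin r, ∃ p, p ∈ U i ∧ f^[a i * n] p ∈ V i := by
      intro i
      obtain ⟨_, q, ⟨p, hp, rfl⟩, hq2⟩ := key i
      exact ⟨p, hp, hq2⟩
    choose p hpU hpV using key'
    refine ⟨n, hn, (fun x : Fin r → X => fun i => f^[a i] (x i))^[n] p, ⟨p, ?_, rfl⟩, ?_⟩
    · exact hUW (fun i _ => hpU i)
    · rw [aux_pi_iterate]
      refine hVW' (fun i _ => ?_)
      rw [← Function.iterate_mul]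
      exact hpV i
end

section
/- Let (X,f) be a topological dynamical system. If (X,f) is mildly mixing, then for every vector a = (a₁,…,a_r) of positive integers the system (X^r, f^{a₁} × f^{a₂} × ⋯ × f^{a_r}) is also mildly mixing. In particular, (X,f) is strongly multi-transitive. -/
open Function Set Filter Topology MeasureTheory

/-- A system is mildly mixing if it is weakly disjoint from every transitive
topological dynamical system. -/
def MildlyMixing {X : Type*} [TopologicalSpace X] (f : X → X) : Prop :=
  ∀ (Y : Type*) [MetricSpace Y] [CompactSpace Y] (g : Y → Y), Continuous g →
    IsTopTransitive g → IsTopTransitive (fun p : X × Y => (f p.1, g p.2))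

/-! ### Auxiliary lemmas -/

section Basic

variable {A B : Type*} [TopologicalSpace A] [TopologicalSpace B]

theorem iterate_prodMap (f : A → A) (g : B → B) (n : ℕ) (p : A × B) :
    (fun p : A × B => (f p.1, g p.2))^[n] p = (f^[n] p.1, g^[n] p.2) := by
  induction n generalizing p with
  | zero => rfl
  | succ n ih =>
      rw [Function.iterate_succ_apply, ih, Function.iterate_succ_apply,
        Function.iterate_succ_apply]

theorem IsTopTransitive.conj {f : A → A} (hf : IsTopTransitive f) (e : A ≃ B)
    (he : Continuous e) (he' : Continuous e.symm) {g : B → B}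
    (hsc : ∀ x, e (f x) = g (e x)) : IsTopTransitive g := by
  have hit : ∀ (n : ℕ) (x : A), e (f^[n] x) = g^[n] (e x) := by
    intro n
    induction n with
    | zero => intro x; rfl
    | succ n ih =>
        intro x
        rw [Function.iterate_succ_apply', Function.iterate_succ_apply', hsc, ih]
  intro U V hU hV hUne hVne
  obtain ⟨u, hu⟩ := hUne
  obtain ⟨v, hv⟩ := hVne
  obtain ⟨n, hn, w, ⟨y, hyU, rfl⟩, hwV⟩ :=
    hf (e ⁻¹' U) (e ⁻¹' V) (hU.preimage he) (hV.preimage he)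
      ⟨e.symm u, by simp [hu]⟩ ⟨e.symm v, by simp [hv]⟩
  exact ⟨n, hn, g^[n] (e y), ⟨e y, hyU, rfl⟩, by rw [← hit]; exact hwV⟩

end Basic

universe uA uB uw

theorem MildlyMixing.conj {A : Type uA} {B : Type uB} [TopologicalSpace A]
    [TopologicalSpace B] {f : A → A} (hf : MildlyMixing.{uA, uw} f) (e : A ≃ B)
    (he : Continuous e) (he' : Continuous e.symm) {g : B → B}
    (hsc : ∀ x, e (f x) = g (e x)) : MildlyMixing.{uB, uw} g := by
  intro Z _ _ h hh ht
  refine (hf Z h hh ht).conj (Equiv.prodCongr e (Equiv.refl Z))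
    (he.comp continuous_fst |>.prodMk continuous_snd)
    (he'.comp continuous_fst |>.prodMk continuous_snd) ?_
  intro p
  simp only [Equiv.prodCongr_apply, Equiv.coe_refl, Prod.map]
  exact Prod.ext (hsc p.1) rfl

/-! ### The cyclic factor -/

/-- A copy of `Fin n` carrying a (discrete) metric. -/
def Cyc (n : ℕ) : Type := Fin n

def Cyc.fin {n : ℕ} (c : Cyc n) : Fin n := c

def Cyc.ofFin {n : ℕ} (i : Fin n) : Cyc n := i

@[simp] theorem Cyc.fin_ofFin {n : ℕ} (i : Fin n) : (Cyc.ofFin i).fin = i := rfl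

@[simp] theorem Cyc.ofFin_fin {n : ℕ} (c : Cyc n) : Cyc.ofFin c.fin = c := rfl

theorem Cyc.fin_injective {n : ℕ} : Function.Injective (Cyc.fin (n := n)) := fun a b h => h

noncomputable instance (n : ℕ) : MetricSpace (Cyc n) :=
  MetricSpace.induced (fun c => (Cyc.fin c).val)
    (fun a b h => Cyc.fin_injective (Fin.val_injective h)) inferInstance

instance (n : ℕ) : Fintype (Cyc n) := Fin.fintype n

theorem cyc_isOpen_singleton {n : ℕ} (c : Cyc n) : IsOpen ({c} : Set (Cyc n)) := by
  rw [Metric.isOpen_singleton_iff]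
  refine ⟨1, one_pos, fun d hd => ?_⟩
  have h1 : dist ((Cyc.fin d).val) ((Cyc.fin c).val) < 1 := hd
  rw [Nat.dist_eq] at h1
  have h2 : ((Cyc.fin d).val : ℝ) = ((Cyc.fin c).val : ℝ) := by
    have := abs_lt.mp h1
    have hv1 : ((Cyc.fin d).val : ℝ) < (Cyc.fin c).val + 1 := by linarith
    have hv2 : ((Cyc.fin c).val : ℝ) < (Cyc.fin d).val + 1 := by linarith
    have hn1 : (Cyc.fin d).val < (Cyc.fin c).val + 1 := by exact_mod_cast hv1
    have hn2 : (Cyc.fin c).val < (Cyc.fin d).val + 1 := by exact_mod_cast hv2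
    have : (Cyc.fin d).val = (Cyc.fin c).val := by omega
    exact_mod_cast this
  exact Cyc.fin_injective (Fin.val_injective (by exact_mod_cast h2))

theorem cyc_isOpen {n : ℕ} (S : Set (Cyc n)) : IsOpen S := by
  rw [← Set.biUnion_of_singleton S]
  exact isOpen_biUnion fun c _ => cyc_isOpen_singleton c

theorem cyc_isClopen {n : ℕ} (S : Set (Cyc n)) : IsClopen S :=
  ⟨isOpen_compl_iff.mp (cyc_isOpen Sᶜ), cyc_isOpen S⟩

/-! ### The suspension system -/

section Suspension

variable {Y : Type*} [MetricSpace Y]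

/-- The `(m+1)`-fold suspension of `g`. -/
noncomputable def sus (g : Y → Y) (m : ℕ) (p : Y × Cyc (m + 1)) : Y × Cyc (m + 1) :=
  (if p.2.fin = Fin.last m then g p.1 else p.1, Cyc.ofFin (p.2.fin + 1))

theorem sus_continuous {g : Y → Y} (hg : Continuous g) (m : ℕ) : Continuous (sus g m) := by
  show Continuous fun p : Y × Cyc (m + 1) =>
    ((if p.2.fin = Fin.last m then g p.1 else p.1 : Y), Cyc.ofFin (p.2.fin + 1))
  apply Continuous.prodMk
  · refine Continuous.if ?_ (hg.comp continuous_fst) continuous_fst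
    intro a ha
    exfalso
    have hcl : IsClopen {p : Y × Cyc (m + 1) | p.2.fin = Fin.last m} := by
      have he : {p : Y × Cyc (m + 1) | p.2.fin = Fin.last m} =
          Prod.snd ⁻¹' {c : Cyc (m + 1) | c.fin = Fin.last m} := rfl
      rw [he]
      exact (cyc_isClopen _).preimage continuous_snd
    rw [hcl.frontier_eq] at ha
    exact ha
  · have hnext : Continuous (fun c : Cyc (m + 1) => Cyc.ofFin (c.fin + 1)) :=
      continuous_def.mpr fun s _ => cyc_isOpen _
    exact hnext.comp continuous_snd

theorem sus_iterate (g : Y → Y) (m k : ℕ) (y : Y) (c : Cyc (m + 1)) :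
    ((sus g m)^[k] (y, c)).1 = g^[(c.fin.val + k) / (m + 1)] y ∧
      ((sus g m)^[k] (y, c)).2.fin.val = (c.fin.val + k) % (m + 1) := by
  induction k with
  | zero =>
      constructor
      · simp [Nat.div_eq_of_lt c.fin.isLt]
      · simp [Nat.mod_eq_of_lt c.fin.isLt]
  | succ k ih =>
      obtain ⟨ih1, ih2⟩ := ih
      set p := (sus g m)^[k] (y, c) with hp
      have hstep : (sus g m)^[k + 1] (y, c) = sus g m p := Function.iterate_succ_apply' _ _ _
      set s := (c.fin.val + k) % (m + 1) with hs
      set q := (c.fin.val + k) / (m + 1) with hq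
      have hsm : s < m + 1 := Nat.mod_lt _ (Nat.succ_pos m)
      have hdm : (m + 1) * q + s = c.fin.val + k := Nat.div_add_mod _ _
      by_cases hcase : s = m
      · have hlast : p.2.fin = Fin.last m := by
          apply Fin.ext
          rw [ih2, Fin.val_last]
          exact hcase
        have hexp : (m + 1) * (q + 1) = (m + 1) * q + (m + 1) := by ring
        have heq : c.fin.val + (k + 1) = (m + 1) * (q + 1) := by omega
        have hdiv : (c.fin.val + (k + 1)) / (m + 1) = q + 1 := by
          rw [heq, Nat.mul_div_cancel_left _ (Nat.succ_pos m)]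
        have hmod : (c.fin.val + (k + 1)) % (m + 1) = 0 := by
          rw [heq, Nat.mul_mod_right]
        rw [hstep]
        constructor
        · show (if p.2.fin = Fin.last m then g p.1 else p.1) = _
          rw [if_pos hlast, ih1, hdiv, Function.iterate_succ_apply']
        · show ((p.2.fin + 1 : Fin (m + 1))).val = _
          rw [Fin.val_add_one, if_pos hlast, hmod]
      · have hnlast : p.2.fin ≠ Fin.last m := by
          intro h
          apply hcase
          have hv := congrArg Fin.val h
          rw [ih2, Fin.val_last] at hv
          exact hv
        have hslt : s < m := by omega
        have h1 : c.fin.val + (k + 1) = (m + 1) * q + (s + 1) := by omega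
        have hdiv : (c.fin.val + (k + 1)) / (m + 1) = q := by
          rw [h1, Nat.mul_add_div (Nat.succ_pos m), Nat.div_eq_of_lt (by omega), Nat.add_zero]
        have hmod : (c.fin.val + (k + 1)) % (m + 1) = s + 1 := by
          rw [h1, Nat.mul_add_mod, Nat.mod_eq_of_lt (by omega)]
        rw [hstep]
        constructor
        · show (if p.2.fin = Fin.last m then g p.1 else p.1) = _
          rw [if_neg hnlast, ih1, hdiv]
        · show ((p.2.fin + 1 : Fin (m + 1))).val = _
          rw [Fin.val_add_one, if_neg hnlast, ih2, hmod]

theorem sus_transitive {g : Y → Y} (ht : IsTopTransitive g) (m : ℕ) :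
    IsTopTransitive (sus g m) := by
  rintro U V hU hV ⟨⟨y0, i⟩, hy0⟩ ⟨⟨z0, j⟩, hz0⟩
  have hUi : IsOpen {y : Y | (y, i) ∈ U} :=
    hU.preimage (continuous_id.prodMk continuous_const)
  have hVj : IsOpen {y : Y | (y, j) ∈ V} :=
    hV.preimage (continuous_id.prodMk continuous_const)
  obtain ⟨k, hk1, w, ⟨y, hyU, rfl⟩, hwV⟩ :=
    ht {y : Y | (y, i) ∈ U} {y : Y | (y, j) ∈ V} hUi hVj ⟨y0, hy0⟩ ⟨z0, hz0⟩
  have hile : i.fin.val < m + 1 := i.fin.isLt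
  have hjle : j.fin.val < m + 1 := j.fin.isLt
  have hkm : m + 1 ≤ k * (m + 1) := Nat.le_mul_of_pos_left _ hk1
  have hcomm : k * (m + 1) = (m + 1) * k := Nat.mul_comm _ _
  refine ⟨k * (m + 1) + j.fin.val - i.fin.val, by omega, ?_⟩
  have hsum : i.fin.val + (k * (m + 1) + j.fin.val - i.fin.val) = (m + 1) * k + j.fin.val := by
    omega
  have hdiv : (i.fin.val + (k * (m + 1) + j.fin.val - i.fin.val)) / (m + 1) = k := by
    rw [hsum, Nat.mul_add_div (Nat.succ_pos m), Nat.div_eq_of_lt hjle, Nat.add_zero]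
  have hmod : (i.fin.val + (k * (m + 1) + j.fin.val - i.fin.val)) % (m + 1) = j.fin.val := by
    rw [hsum, Nat.mul_add_mod, Nat.mod_eq_of_lt hjle]
  refine ⟨(sus g m)^[k * (m + 1) + j.fin.val - i.fin.val] (y, i), ⟨(y, i), hyU, rfl⟩, ?_⟩
  obtain ⟨h1, h2⟩ := sus_iterate g m (k * (m + 1) + j.fin.val - i.fin.val) y i
  have hpt : (sus g m)^[k * (m + 1) + j.fin.val - i.fin.val] (y, i) = (g^[k] y, j) := by
    refine Prod.ext ?_ ?_
    · rw [h1, hdiv]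
    · apply Cyc.fin_injective
      apply Fin.ext
      rw [h2, hmod]
  rw [hpt]
  exact hwV

/-- If `F × sus g m` is transitive, then `F^[m+1] × g` is transitive. -/
theorem trans_of_sus_prod {X' : Type*} [TopologicalSpace X'] {F : X' → X'} {g : Y → Y}
    (m : ℕ)
    (h : IsTopTransitive (fun p : X' × (Y × Cyc (m + 1)) => (F p.1, sus g m p.2))) :
    IsTopTransitive (fun p : X' × Y => (F^[m + 1] p.1, g p.2)) := by
  intro U V hU hV hUne hVne
  set c0 : Cyc (m + 1) := Cyc.ofFin 0 with hc0
  set pr : X' × (Y × Cyc (m + 1)) → X' × Y := fun p => (p.1, p.2.1) with hpr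
  have prc : Continuous pr := continuous_fst.prodMk (continuous_fst.comp continuous_snd)
  set UU : Set (X' × (Y × Cyc (m + 1))) := pr ⁻¹' U ∩ {p | p.2.2 = c0} with hUU
  set VV : Set (X' × (Y × Cyc (m + 1))) := pr ⁻¹' V ∩ {p | p.2.2 = c0} with hVV
  have hfiber : IsOpen {p : X' × (Y × Cyc (m + 1)) | p.2.2 = c0} := by
    have : {p : X' × (Y × Cyc (m + 1)) | p.2.2 = c0} =
        (fun p : X' × (Y × Cyc (m + 1)) => p.2.2) ⁻¹' {c0} := rfl
    rw [this]
    exact (cyc_isOpen_singleton c0).preimage (continuous_snd.comp continuous_snd)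
  obtain ⟨⟨x0, y0⟩, hx0⟩ := hUne
  obtain ⟨⟨x1, y1⟩, hx1⟩ := hVne
  obtain ⟨n, hn1, p, ⟨q, hqU, rfl⟩, hpV⟩ :=
    h UU VV ((hU.preimage prc).inter hfiber) ((hV.preimage prc).inter hfiber)
      ⟨(x0, (y0, c0)), hx0, rfl⟩ ⟨(x1, (y1, c0)), hx1, rfl⟩
  obtain ⟨x, y, c⟩ := q
  obtain ⟨hqU1, hqU2⟩ := hqU
  have hc : c = c0 := hqU2
  subst hc
  rw [iterate_prodMap] at hpV
  obtain ⟨hpV1, hpV2⟩ := hpV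
  obtain ⟨hs1, hs2⟩ := sus_iterate g m n y c0
  have hc0v : c0.fin.val = 0 := rfl
  rw [hc0v, Nat.zero_add] at hs1 hs2
  have hmod0 : n % (m + 1) = 0 := by
    have h := congrArg (fun d : Cyc (m + 1) => d.fin.val) hpV2
    simpa [hs2, hc0v] using h
  set K := n / (m + 1) with hK
  have hnK : n = (m + 1) * K := by
    have hdm2 : (m + 1) * K + n % (m + 1) = n := by rw [hK]; exact Nat.div_add_mod n (m + 1)
    omega
  have hK1 : 1 ≤ K := by
    rcases Nat.eq_zero_or_pos K with h0 | h0
    · rw [h0, Nat.mul_zero] at hnK; omega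
    · exact h0
  have hfst : ((sus g m)^[n] (y, c0)).1 = g^[K] y := hs1
  refine ⟨K, hK1, ((F^[m + 1])^[K] x, g^[K] y), ⟨(x, y), hqU1, ?_⟩, ?_⟩
  · rw [iterate_prodMap]
  · have hmem : (F^[n] x, ((sus g m)^[n] (y, c0)).1) ∈ V := hpV1
    rw [hfst, hnK, Function.iterate_mul] at hmem
    exact hmem

end Suspension

/-! ### Universe-change for mild mixing -/

universe u u₂ v

theorem MildlyMixing.of_univ {X : Type u} [TopologicalSpace X] {f : X → X}
    (hmm : MildlyMixing.{u, u₂} f) : MildlyMixing.{u, v} f := by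
  intro Y _ _ g hg ht
  rcases isEmpty_or_nonempty Y with hY | hY
  · rintro U V _ _ ⟨⟨x, y⟩, -⟩ _
    exact absurd trivial (by exact fun _ => (hY.false y))
  · -- embed `Y` into `ℓ^∞(ℕ)` and lift the image to universe `u₂`
    set e0 := kuratowskiEmbedding Y with he0
    have hiso : Isometry e0 := kuratowskiEmbedding.isometry Y
    set Z0 := Set.range e0 with hZ0
    have hZcomp : IsCompact Z0 := isCompact_range hiso.continuous
    haveI : CompactSpace Z0 := isCompact_iff_compactSpace.mp hZcomp
    set Z := ULift.{u₂} Z0 with hZ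
    set E : Y ≃ₜ Z := hiso.isometryEquivOnRange.toHomeomorph.trans Homeomorph.ulift.symm with hE
    haveI : CompactSpace Z := E.compactSpace
    set h : Z → Z := fun z => E (g (E.symm z)) with hh
    have hhc : Continuous h := E.continuous.comp (hg.comp E.symm.continuous)
    have hht : IsTopTransitive h :=
      ht.conj E.toEquiv E.continuous E.symm.continuous
        (fun x => by simp [hh, E.symm_apply_apply])
    have HT := hmm Z h hhc hht
    refine HT.conj (Equiv.prodCongr (Equiv.refl X) E.symm.toEquiv)
      (continuous_fst.prodMk (E.symm.continuous.comp continuous_snd))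
      (continuous_fst.prodMk (E.continuous.comp continuous_snd)) ?_
    intro p
    simp only [Equiv.prodCongr_apply, Equiv.coe_refl, Prod.map, id_eq,
      Homeomorph.coe_toEquiv, Homeomorph.coe_symm_toEquiv]
    refine Prod.ext rfl ?_
    simp [hh, E.symm_apply_apply]

theorem MildlyMixing.isTopTransitive {X : Type u} [TopologicalSpace X] {f : X → X}
    (hmm : MildlyMixing.{u, u₂} f) : IsTopTransitive f := by
  have h := MildlyMixing.of_univ.{u, u₂, u₂} hmm PUnit.{u₂ + 1} id continuous_id ?_
  · intro U V hU hV hUne hVne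
    obtain ⟨n, hn, p, ⟨q, hqU, rfl⟩, hpV⟩ :=
      h (U ×ˢ (Set.univ : Set PUnit.{u₂ + 1})) (V ×ˢ Set.univ) (hU.prod isOpen_univ)
        (hV.prod isOpen_univ) (hUne.prod ⟨PUnit.unit, trivial⟩)
        (hVne.prod ⟨PUnit.unit, trivial⟩)
    rw [iterate_prodMap] at hpV
    exact ⟨n, hn, f^[n] q.1, ⟨q.1, hqU.1, rfl⟩, hpV.1⟩
  · intro U V _ _ ⟨u, hu⟩ ⟨w, hw⟩
    exact ⟨1, le_refl 1, w, ⟨u, hu, rfl⟩, hw⟩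

/-! ### Mild mixing of iterates and products -/

theorem MildlyMixing.iterate {X : Type u} [TopologicalSpace X] {f : X → X}
    (hf : MildlyMixing.{u, u₂} f) (n : ℕ) (hn : 1 ≤ n) : MildlyMixing.{u, v} (f^[n]) := by
  obtain ⟨m, rfl⟩ : ∃ m, n = m + 1 := ⟨n - 1, by omega⟩
  intro Y _ _ g hg ht
  have hsust : IsTopTransitive (sus g m) := sus_transitive ht m
  have h2 := MildlyMixing.of_univ.{u, u₂, v} hf (Y × Cyc (m + 1)) (sus g m) (sus_continuous hg m) hsust
  exact trans_of_sus_prod m h2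

theorem MildlyMixing.prod {X : Type u} [TopologicalSpace X] {Y : Type u} [MetricSpace Y]
    [CompactSpace Y] {f : X → X} {g : Y → Y} (hg : Continuous g)
    (hf : MildlyMixing.{u, u₂} f) (hgm : MildlyMixing.{u, u₂} g) :
    MildlyMixing.{u, v} (fun p : X × Y => (f p.1, g p.2)) := by
  intro Z _ _ h hh ht
  have h1 : IsTopTransitive (fun q : Y × Z => (g q.1, h q.2)) :=
    MildlyMixing.of_univ.{u, u₂, v} hgm Z h hh ht
  have h2 := MildlyMixing.of_univ.{u, u₂, max u v} hf (Y × Z) (fun q : Y × Z => (g q.1, h q.2))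
    ((hg.comp continuous_fst).prodMk (hh.comp continuous_snd)) h1
  refine h2.conj (Equiv.prodAssoc X Y Z).symm
    (Homeomorph.prodAssoc X Y Z).symm.continuous (Homeomorph.prodAssoc X Y Z).continuous ?_
  intro p
  rfl

theorem MildlyMixing.pi {X : Type u} [MetricSpace X] [CompactSpace X] {f : X → X}
    (hf : Continuous f) (hmm : MildlyMixing.{u, u₂} f) (r : ℕ) (a : Fin r → ℕ)
    (ha : ∀ i, 1 ≤ a i) :
    MildlyMixing.{u, u₂} (fun x : Fin r → X => fun i => f^[a i] (x i)) := by
  induction r with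
  | zero =>
      haveI hsub : Subsingleton (Fin 0 → X) := ⟨fun a b => funext fun i => i.elim0⟩
      intro Z _ _ h hh ht
      rintro U V hU hV ⟨⟨p0, z0⟩, hU0⟩ ⟨⟨p1, z1⟩, hV0⟩
      have hU1 : IsOpen {z : Z | (p0, z) ∈ U} :=
        hU.preimage (continuous_const.prodMk continuous_id)
      have hV1 : IsOpen {z : Z | (p0, z) ∈ V} :=
        hV.preimage (continuous_const.prodMk continuous_id)
      have hp1 : p1 = p0 := Subsingleton.elim _ _
      obtain ⟨n, hn, w, ⟨z, hzU, rfl⟩, hwV⟩ :=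
        ht {z : Z | (p0, z) ∈ U} {z : Z | (p0, z) ∈ V} hU1 hV1 ⟨z0, hU0⟩
          ⟨z1, by rw [← hp1]; exact hV0⟩
      refine ⟨n, hn, _, ⟨(p0, z), hzU, rfl⟩, ?_⟩
      have hit := iterate_prodMap (fun x : Fin 0 → X => fun i => f^[a i] (x i)) h n (p0, z)
      rw [hit]
      have : ((fun x : Fin 0 → X => fun i => f^[a i] (x i))^[n] p0, h^[n] z) = (p0, h^[n] z) :=
        Prod.ext (Subsingleton.elim _ _) rfl
      rw [this]
      exact hwV
  | succ r ih =>
      have h1 : MildlyMixing.{u, u₂} (f^[a 0]) := MildlyMixing.iterate.{u, u₂, u₂} hmm (a 0) (ha 0)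
      have h2 : MildlyMixing.{u, u₂}
          (fun x : Fin r → X => fun i => f^[a i.succ] (x i)) :=
        ih (fun i => a i.succ) (fun i => ha _)
      have hQc : Continuous (fun x : Fin r → X => fun i => f^[a i.succ] (x i)) :=
        continuous_pi fun i => (hf.iterate _).comp (continuous_apply i)
      have h3 := MildlyMixing.prod.{u, u₂, u₂} hQc h1 h2
      refine h3.conj (Fin.consEquiv (fun _ => X)) ?_ ?_ ?_
      · exact continuous_pi fun i => by
          refine Fin.cases ?_ ?_ i
          · simpa [Fin.consEquiv] using (continuous_fst : Continuous
              (fun p : X × (Fin r → X) => p.1))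
          · intro j
            simpa [Fin.consEquiv, Function.comp_def] using
              ((continuous_apply j).comp (continuous_snd :
                Continuous (fun p : X × (Fin r → X) => p.2)))
      · exact ((continuous_apply 0).prodMk (continuous_pi fun i => continuous_apply i.succ))
      · intro p
        funext i
        refine Fin.cases ?_ ?_ i
        · simp [Fin.consEquiv]
        · intro j
          simp [Fin.consEquiv]

theorem mildlyMixing_products_mildlyMixing
    {X : Type*} [MetricSpace X] [CompactSpace X] (f : X → X) (hf : Continuous f)
    (hmm : MildlyMixing f) :
    (∀ r : ℕ, 1 ≤ r → ∀ a : Fin r → ℕ, (∀ i, 1 ≤ a i) →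
      MildlyMixing (fun x : Fin r → X => fun i => f^[a i] (x i))) ∧
    StrongMultiTrans f := by
  constructor
  · intro r _ a ha
    exact MildlyMixing.of_univ (MildlyMixing.pi hf hmm r a ha)
  · intro r _ a ha
    exact MildlyMixing.isTopTransitive (MildlyMixing.pi hf hmm r a ha)
end

section
/- Let (X,f) be a topological dynamical system. If (X,f) is an HY-system (totally transitive with dense small periodic sets), then (X,f) is weakly disjoint from every totally transitive topological dynamical system. -/
open Function Set Filter Topology MeasureTheory

/-- `(X, f)` is totally transitive if `f^[n]` is transitive for every `n ≥ 1`. -/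
def TotallyTrans {X : Type*} [TopologicalSpace X] (f : X → X) : Prop :=
  ∀ n : ℕ, 1 ≤ n → IsTopTransitive (f^[n])

/-- `(X, f)` has dense small periodic sets if every non-empty open set contains a non-empty
closed set invariant under some iterate `f^[k]`, `k ≥ 1`. -/
def DenseSmallPeriodicSets {X : Type*} [TopologicalSpace X] (f : X → X) : Prop :=
  ∀ U : Set X, IsOpen U → U.Nonempty →
    ∃ Y : Set X, Y.Nonempty ∧ IsClosed Y ∧ Y ⊆ U ∧ ∃ k : ℕ, 1 ≤ k ∧ f^[k] '' Y ⊆ Y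

/-- An HY-system is a totally transitive system with dense small periodic sets. -/
def HYSystem {X : Type*} [TopologicalSpace X] (f : X → X) : Prop :=
  TotallyTrans f ∧ DenseSmallPeriodicSets f

lemma trans_surj {Y : Type*} [MetricSpace Y] [CompactSpace Y] [Nonempty Y]
    (g : Y → Y) (hg : Continuous g) (ht : IsTopTransitive g) : Surjective g := by
  intro y
  by_contra h
  push_neg at h
  have hclosed : IsClosed (range g) := (isCompact_range hg).isClosed
  obtain ⟨n, hn, z, ⟨x, -, rfl⟩, hz⟩ :=
    ht univ (range g)ᶜ isOpen_univ hclosed.isOpen_compl univ_nonempty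
      ⟨y, fun ⟨x, hx⟩ => h x hx⟩
  obtain ⟨n, rfl⟩ := Nat.exists_eq_add_of_le hn
  exact hz ⟨g^[n] x, (Function.iterate_add_apply g 1 n x).symm⟩

lemma iter_inv {X : Type*} (f : X → X) (Y0 : Set X) (k : ℕ)
    (h : f^[k] '' Y0 ⊆ Y0) : ∀ n : ℕ, f^[n * k] '' Y0 ⊆ Y0 := by
  intro n
  induction n with
  | zero => simp
  | succ n ih =>
    have hco : f^[(n + 1) * k] = f^[n * k] ∘ f^[k] := by
      rw [add_mul, one_mul, Function.iterate_add]
    rw [hco, image_comp]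
    exact (image_mono (f := f^[n * k]) h).trans ih

theorem HYSystem_weakly_disjoint_totallyTrans
    {X : Type*} [MetricSpace X] [CompactSpace X] (f : X → X) (hf : Continuous f)
    (hHY : HYSystem f) :
    ∀ (Y : Type*) [MetricSpace Y] [CompactSpace Y] (g : Y → Y), Continuous g →
      TotallyTrans g → IsTopTransitive (fun p : X × Y => (f p.1, g p.2)) := by
  intro Y _ _ g hg hgt S T hS hT hSne hTne
  obtain ⟨⟨x0, y0⟩, hp⟩ := hSne
  obtain ⟨⟨x1, y1⟩, hq⟩ := hTne
  obtain ⟨U1, U2, hU1, hU2, hx0, hy0, hUS⟩ := isOpen_prod_iff.mp hS x0 y0 hp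
  obtain ⟨V1, V2, hV1, hV2, hx1, hy1, hVT⟩ := isOpen_prod_iff.mp hT x1 y1 hq
  -- f is transitive
  have hf1 : IsTopTransitive f := by simpa using hHY.1 1 le_rfl
  obtain ⟨m, hm, w, ⟨xw, hxwU, rfl⟩, hwV⟩ := hf1 U1 V1 hU1 hV1 ⟨x0, hx0⟩ ⟨x1, hx1⟩
  set W := U1 ∩ f^[m] ⁻¹' V1 with hWdef
  have hWopen : IsOpen W := hU1.inter (hV1.preimage (hf.iterate m))
  have hWne : W.Nonempty := ⟨xw, hxwU, hwV⟩
  obtain ⟨Y0, hY0ne, -, hY0W, k, hk, hkinv⟩ := hHY.2 W hWopen hWne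
  -- g is surjective
  haveI : Nonempty Y := ⟨y0⟩
  have hgs : Surjective g := trans_surj g hg (by simpa using hgt 1 le_rfl)
  have hgms : Surjective (g^[m]) := hgs.iterate m
  obtain ⟨yv, hyv⟩ := hgms y1
  have hV2' : IsOpen (g^[m] ⁻¹' V2) := hV2.preimage (hg.iterate m)
  obtain ⟨n, hn, z, ⟨y2, hy2U, rfl⟩, hzV⟩ :=
    hgt k hk U2 (g^[m] ⁻¹' V2) hU2 hV2' ⟨y0, hy0⟩ ⟨yv, by simp [hyv, hy1]⟩
  -- the common hitting time
  refine ⟨n * k + m, le_add_of_le_right hm, ?_⟩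
  obtain ⟨y, hy⟩ := hY0ne
  have hyW : f^[n * k] y ∈ W := hY0W (iter_inv f Y0 k hkinv n ⟨y, hy, rfl⟩)
  have hmap : (fun p : X × Y => (f p.1, g p.2)) = Prod.map f g := rfl
  refine ⟨(f^[n * k + m] y, g^[n * k + m] y2), ⟨(y, y2), hUS ⟨(hY0W hy).1, hy2U⟩, ?_⟩, ?_⟩
  · rw [hmap, Prod.map_iterate]
    rfl
  · refine hVT ⟨?_, ?_⟩
    · have : f^[n * k + m] y = f^[m] (f^[n * k] y) := by
        rw [add_comm, Function.iterate_add_apply]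
      rw [this]
      exact hyW.2
    · have h1 : g^[n * k + m] y2 = g^[m] (g^[n * k] y2) := by
        rw [add_comm, Function.iterate_add_apply]
      have h2 : (g^[k])^[n] y2 = g^[n * k] y2 := by
        rw [mul_comm, Function.iterate_mul]
      rw [h1, ← h2]
      exact hzV
end

section
/- Let (X,f) be a topological dynamical system. Then (X,f) is multi-transitive if and only if for every two non-empty open subsets U, V of X the hitting time set N(U,V) belongs to F[∞], i.e., for every r ≥ 1 and every (n₁,…,n_r) ∈ ℤ₊^r there exists k ≥ 1 such that ki + n_i ∈ N(U,V) for all i = 1,…,r. -/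
open Function Set Filter Topology MeasureTheory

private lemma prodIter {X : Type*} (f : X → X) {r : ℕ} (a : Fin r → ℕ) (n : ℕ)
    (x : Fin r → X) :
    (fun x : Fin r → X => fun i => f^[a i] (x i))^[n] x = fun i => f^[n * a i] (x i) := by
  induction n generalizing x with
  | zero => simp
  | succ n ih =>
    rw [Function.iterate_succ_apply, ih]
    funext i
    show f^[n * a i] (f^[a i] (x i)) = f^[(n+1) * a i] (x i)
    rw [← Function.iterate_add_apply]
    congr 1
    ring

private lemma multiTrans_isTopTransitive {X : Type*} [TopologicalSpace X] {f : X → X}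
    (h : MultiTrans f) : IsTopTransitive f := by
  intro U V hUo hVo hUne hVne
  obtain ⟨n, hn, hne⟩ := h 1 le_rfl (Set.univ.pi fun _ => U) (Set.univ.pi fun _ => V)
    (isOpen_set_pi Set.finite_univ fun _ _ => hUo)
    (isOpen_set_pi Set.finite_univ fun _ _ => hVo)
    ⟨fun _ => hUne.choose, fun _ _ => hUne.choose_spec⟩
    ⟨fun _ => hVne.choose, fun _ _ => hVne.choose_spec⟩
  obtain ⟨y, ⟨x, hx, rfl⟩, hy⟩ := hne
  have h0 := hy 0 (Set.mem_univ 0)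
  simp only [prodIter] at h0
  refine ⟨n, hn, f^[n] (x 0), ⟨x 0, hx 0 (Set.mem_univ 0), rfl⟩, ?_⟩
  simpa using h0

private lemma preimage_nonempty {X : Type*} [TopologicalSpace X] {f : X → X}
    (hf : Continuous f) (htr : IsTopTransitive f) {V : Set X} (hVo : IsOpen V)
    (hVne : V.Nonempty) : ∀ m, (f^[m] ⁻¹' V).Nonempty := by
  intro m
  induction m with
  | zero => simpa using hVne
  | succ m ih =>
    have hV'o : IsOpen (f^[m] ⁻¹' V) := (hf.iterate m).isOpen_preimage _ hVo
    obtain ⟨n, hn, y, ⟨x, hx, rfl⟩, hy⟩ := htr _ _ hV'o hV'o ih ih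
    refine ⟨f^[n-1] x, ?_⟩
    have heq : f^[m+1] (f^[n-1] x) = f^[m] (f^[n] x) := by
      rw [← Function.iterate_add_apply, ← Function.iterate_add_apply]
      congr 1
      omega
    show f^[m+1] (f^[n-1] x) ∈ V
    rw [heq]
    exact hy

private lemma big_hit {X : Type*} [TopologicalSpace X] {f : X → X} (hf : Continuous f)
    (htr : IsTopTransitive f) {A B : Set X} (hAo : IsOpen A) (hBo : IsOpen B)
    (hAne : A.Nonempty) (hBne : B.Nonempty) (M : ℕ) :
    ∃ n, M ≤ n ∧ ∃ C, IsOpen C ∧ C.Nonempty ∧ C ⊆ A ∧ ∀ x ∈ C, f^[n] x ∈ B := by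
  induction M with
  | zero =>
    obtain ⟨n, hn, y, ⟨x, hx, rfl⟩, hy⟩ := htr A B hAo hBo hAne hBne
    exact ⟨n, Nat.zero_le _, A ∩ f^[n] ⁻¹' B,
      hAo.inter ((hf.iterate n).isOpen_preimage _ hBo),
      ⟨x, hx, hy⟩, Set.inter_subset_left, fun z hz => hz.2⟩
  | succ M ih =>
    obtain ⟨n, hn, C, hCo, hCne, hCA, hCB⟩ := ih
    obtain ⟨n', hn', y, ⟨x, hx, rfl⟩, hy⟩ := htr A C hAo hCo hAne hCne
    refine ⟨n + n', by omega, A ∩ f^[n'] ⁻¹' C,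
      hAo.inter ((hf.iterate n').isOpen_preimage _ hCo),
      ⟨x, hx, hy⟩, Set.inter_subset_left, fun z hz => ?_⟩
    rw [Function.iterate_add_apply]
    exact hCB _ hz.2

private lemma chain {X : Type*} [TopologicalSpace X] {f : X → X} (hf : Continuous f)
    (htr : IsTopTransitive f) : ∀ (r : ℕ) (A : Fin (r+1) → Set X),
    (∀ i, IsOpen (A i)) → (∀ i, (A i).Nonempty) → ∀ b : Fin (r+1) → ℕ,
    ∃ (W : Set X) (s : Fin (r+1) → ℕ), IsOpen W ∧ W.Nonempty ∧ (∀ i, b i ≤ s i) ∧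
      ∀ i, ∀ x ∈ W, f^[s i] x ∈ A i := by
  intro r
  induction r with
  | zero =>
    intro A hAo hAne b
    obtain ⟨n, hn, C, hCo, hCne, _, hCB⟩ :=
      big_hit hf htr (hAo 0) (hAo 0) (hAne 0) (hAne 0) (b 0)
    refine ⟨C, fun _ => n, hCo, hCne, fun i => ?_, fun i x hx => ?_⟩
    · have h0 : i = 0 := Fin.ext (by omega)
      rw [h0]; exact hn
    · have h0 : i = 0 := Fin.ext (by omega)
      rw [h0]; exact hCB x hx
  | succ r ih =>
    intro A hAo hAne b
    obtain ⟨W', s', hW'o, hW'ne, hs'b, hs'⟩ :=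
      ih (fun i => A i.succ) (fun i => hAo _) (fun i => hAne _) (fun i => b i.succ)
    obtain ⟨n, hn, C, hCo, hCne, hCW', hCB⟩ :=
      big_hit hf htr hW'o (hAo 0) hW'ne (hAne 0) (b 0)
    refine ⟨C, Fin.cases n s', hCo, hCne, fun i => ?_, fun i x hx => ?_⟩
    · induction i using Fin.cases with
      | zero => simpa using hn
      | succ j => simpa using hs'b j
    · induction i using Fin.cases with
      | zero => simpa using hCB x hx
      | succ j => simpa using hs' j x (hCW' hx)

theorem multiTrans_iff_familyInfty_transitive
    {X : Type*} [MetricSpace X] [CompactSpace X] (f : X → X) (hf : Continuous f) :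
    MultiTrans f ↔
      ∀ U V : Set X, IsOpen U → IsOpen V → U.Nonempty → V.Nonempty →
        ∀ r : ℕ, 1 ≤ r → ∀ nv : Fin r → ℕ, ∃ k : ℕ, 1 ≤ k ∧
          ∀ i : Fin r, k * ((i : ℕ) + 1) + nv i ∈ HittingTimes f U V := by
  constructor
  · intro h U V hUo hVo hUne hVne r hr nv
    have htr := multiTrans_isTopTransitive h
    have hpre := fun m => preimage_nonempty hf htr hVo hVne m
    obtain ⟨k, hk, hne⟩ := h r hr (Set.univ.pi fun _ => U)
      (Set.univ.pi fun i => f^[nv i] ⁻¹' V)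
      (isOpen_set_pi Set.finite_univ fun _ _ => hUo)
      (isOpen_set_pi Set.finite_univ fun i _ => (hf.iterate (nv i)).isOpen_preimage _ hVo)
      ⟨fun _ => hUne.choose, fun _ _ => hUne.choose_spec⟩
      ⟨fun i => (hpre (nv i)).choose, fun i _ => (hpre (nv i)).choose_spec⟩
    obtain ⟨y, ⟨x, hx, rfl⟩, hy⟩ := hne
    refine ⟨k, hk, fun i => ?_⟩
    have hxi := hy i (Set.mem_univ i)
    simp only [prodIter] at hxi
    refine ⟨?_, f^[k * ((i:ℕ)+1) + nv i] (x i), ⟨x i, hx i (Set.mem_univ i), rfl⟩, ?_⟩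
    · have hle : k ≤ k * ((i:ℕ)+1) := Nat.le_mul_of_pos_right _ (by omega)
      omega
    · have heq : f^[k * ((i:ℕ)+1) + nv i] (x i) = f^[nv i] (f^[k * ((i:ℕ)+1)] (x i)) := by
        rw [← Function.iterate_add_apply]
        congr 1
        omega
      rw [heq]
      exact hxi
  · intro h n hn
    have htr : IsTopTransitive f := by
      intro U V hUo hVo hUne hVne
      obtain ⟨k, hk, hmem⟩ := h U V hUo hVo hUne hVne 1 le_rfl (fun _ => 0)
      exact ⟨_, (hmem 0).1, (hmem 0).2⟩
    intro U' V' hU'o hV'o hU'ne hV'ne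
    obtain ⟨u, hu⟩ := hU'ne
    obtain ⟨v, hv⟩ := hV'ne
    obtain ⟨IU, tU, hIU, hIUsub⟩ := isOpen_pi_iff.mp hU'o u hu
    obtain ⟨IV, tV, hIV, hIVsub⟩ := isOpen_pi_iff.mp hV'o v hv
    classical
    set Ui : Fin n → Set X := fun i => if i ∈ IU then tU i else Set.univ with hUidef
    set Vi : Fin n → Set X := fun i => if i ∈ IV then tV i else Set.univ with hVidef
    have hUio : ∀ i, IsOpen (Ui i) := by
      intro i; simp only [hUidef]; split
      · exact (hIU i (by assumption)).1
      · exact isOpen_univ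
    have hVio : ∀ i, IsOpen (Vi i) := by
      intro i; simp only [hVidef]; split
      · exact (hIV i (by assumption)).1
      · exact isOpen_univ
    have hUine : ∀ i, (Ui i).Nonempty := by
      intro i; simp only [hUidef]; split
      · exact ⟨u i, (hIU i (by assumption)).2⟩
      · exact ⟨u i, Set.mem_univ _⟩
    have hVine : ∀ i, (Vi i).Nonempty := by
      intro i; simp only [hVidef]; split
      · exact ⟨v i, (hIV i (by assumption)).2⟩
      · exact ⟨v i, Set.mem_univ _⟩
    have hUisub : Set.univ.pi Ui ⊆ U' := by
      intro y hy
      apply hIUsub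
      rw [Set.mem_pi]
      intro a ha
      have := hy a (Set.mem_univ a)
      rw [Finset.mem_coe] at ha
      simpa [hUidef, ha] using this
    have hVisub : Set.univ.pi Vi ⊆ V' := by
      intro y hy
      apply hIVsub
      rw [Set.mem_pi]
      intro a ha
      have := hy a (Set.mem_univ a)
      rw [Finset.mem_coe] at ha
      simpa [hVidef, ha] using this
    obtain ⟨m, rfl⟩ : ∃ m, n = m + 1 := ⟨n - 1, by omega⟩
    obtain ⟨W', t, hW'o, hW'ne, _, ht⟩ := chain hf htr m Vi hVio hVine (fun _ => 0)
    obtain ⟨W, s, hWo, hWne, hst, hsU⟩ := chain hf htr m Ui hUio hUine t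
    obtain ⟨k, hk, hmem⟩ := h W W' hWo hW'o hWne hW'ne (m+1) (by omega) (fun i => s i - t i)
    have hex : ∀ i : Fin (m+1), ∃ w ∈ W, f^[k * ((i:ℕ)+1) + (s i - t i)] w ∈ W' := by
      intro i
      obtain ⟨y, ⟨w, hwW, rfl⟩, hyW'⟩ := (hmem i).2
      exact ⟨w, hwW, hyW'⟩
    choose w hwW hwW' using hex
    set x : Fin (m+1) → X := fun i => f^[s i] (w i) with hxdef
    have hxU' : x ∈ U' := hUisub (fun i _ => hsU i (w i) (hwW i))
    have hgx : (fun y : Fin (m+1) → X => fun i => f^[(i:ℕ)+1] (y i))^[k] x ∈ V' := by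
      apply hVisub
      intro i _
      simp only [prodIter]
      have heq : f^[k * ((i:ℕ)+1)] (x i)
          = f^[t i] (f^[k * ((i:ℕ)+1) + (s i - t i)] (w i)) := by
        simp only [hxdef]
        rw [← Function.iterate_add_apply, ← Function.iterate_add_apply]
        congr 1
        have := hst i
        omega
      rw [heq]
      exact ht i _ (hwW' i)
    exact ⟨k, hk, _, ⟨x, hxU', rfl⟩, hgx⟩
end

section
/- Let (X,f) be a topological dynamical system. Then (X,f) is strongly multi-transitive if and only if (X×X, f×f) is F[∞]-transitive, i.e., for every two non-empty open subsets U, V of X×X the hitting time set N_{f×f}(U,V) lies in F[∞]. -/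
open Function Set Filter Topology MeasureTheory

/-- Iterating the coordinatewise product map. -/
lemma iter_pi_aux {X : Type*} (f : X → X) {r : ℕ} (a : Fin r → ℕ) (n : ℕ) :
    (fun x : Fin r → X => fun i => f^[a i] (x i))^[n] =
      fun x : Fin r → X => fun i => f^[n * a i] (x i) := by
  induction n with
  | zero => funext x; simp
  | succ n ih =>
      funext x i
      rw [Function.iterate_succ_apply, ih]
      simp only
      rw [← Function.iterate_add_apply]
      ring_nf

/-- Iterating the product map on `X × X`. -/
lemma iter_prod_aux {X : Type*} (f : X → X) (m : ℕ) (p : X × X) :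
    (fun p : X × X => (f p.1, f p.2))^[m] p = (f^[m] p.1, f^[m] p.2) := by
  induction m generalizing p with
  | zero => simp
  | succ m ih => rw [Function.iterate_succ_apply, ih]; simp

/-- A nonempty open set in a finite product contains a nonempty open box. -/
lemma pi_subset_of_open_aux {r : ℕ} {X : Type*} [TopologicalSpace X] {s : Set (Fin r → X)}
    (hs : IsOpen s) {x : Fin r → X} (hx : x ∈ s) :
    ∃ u : Fin r → Set X, (∀ i, IsOpen (u i)) ∧ (∀ i, x i ∈ u i) ∧ Set.pi univ u ⊆ s := by
  obtain ⟨I, u, h1, h2⟩ := isOpen_pi_iff.1 hs x hx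
  refine ⟨fun i => if i ∈ I then u i else univ, ?_, ?_, ?_⟩
  · intro i; by_cases h : i ∈ I <;> simp [h, (h1 i · |>.1)]
  · intro i; by_cases h : i ∈ I <;> simp [h, (h1 i · |>.2)]
  · intro y hy
    apply h2
    intro i hi
    have := hy i (mem_univ i)
    simp only at this
    rwa [if_pos (Finset.mem_coe.mp hi)] at this

/-- Furstenberg intersection lemma: given the "pair-hitting" property `H`,
the hitting sets of finitely many pairs of open sets contain a common hitting set. -/
lemma furst_inter_aux {X : Type*} [TopologicalSpace X] (f : X → X) (hX : Nonempty X)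
    (H : ∀ A B C D : Set X, IsOpen A → IsOpen B → IsOpen C → IsOpen D →
      A.Nonempty → B.Nonempty → C.Nonempty → D.Nonempty →
      ∃ k : ℕ, 1 ≤ k ∧ (A ∩ f^[k] ⁻¹' C).Nonempty ∧ (B ∩ f^[k] ⁻¹' D).Nonempty)
    (hfc : Continuous f) :
    ∀ (r : ℕ) (U V : Fin r → Set X), (∀ i, IsOpen (U i)) → (∀ i, IsOpen (V i)) →
      (∀ i, (U i).Nonempty) → (∀ i, (V i).Nonempty) →
      ∃ W W' : Set X, IsOpen W ∧ IsOpen W' ∧ W.Nonempty ∧ W'.Nonempty ∧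
        ∀ n : ℕ, (f^[n] '' W ∩ W').Nonempty → ∀ i, (f^[n] '' (U i) ∩ V i).Nonempty := by
  intro r
  induction r with
  | zero =>
      intro U V _ _ _ _
      exact ⟨univ, univ, isOpen_univ, isOpen_univ, univ_nonempty, univ_nonempty,
        fun n _ i => i.elim0⟩
  | succ r ih =>
      intro U V hU hV hUne hVne
      obtain ⟨W, W', hWo, hW'o, hWne, hW'ne, hprop⟩ :=
        ih (fun i => U i.castSucc) (fun i => V i.castSucc)
          (fun i => hU _) (fun i => hV _) (fun i => hUne _) (fun i => hVne _)
      obtain ⟨k, hk1, ⟨p, hpW, hpU⟩, ⟨q, hqW', hqV⟩⟩ :=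
        H W W' (U (Fin.last r)) (V (Fin.last r)) hWo hW'o (hU _) (hV _)
          hWne hW'ne (hUne _) (hVne _)
      refine ⟨W ∩ f^[k] ⁻¹' (U (Fin.last r)), W' ∩ f^[k] ⁻¹' (V (Fin.last r)),
        hWo.inter ((hfc.iterate k).isOpen_preimage _ (hU _)),
        hW'o.inter ((hfc.iterate k).isOpen_preimage _ (hV _)),
        ⟨p, hpW, hpU⟩, ⟨q, hqW', hqV⟩, ?_⟩
      rintro n ⟨y, ⟨x, ⟨hxW, hxU⟩, rfl⟩, hyW', hyV⟩
      intro i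
      refine Fin.lastCases ?_ ?_ i
      · refine ⟨f^[k] (f^[n] x), ⟨f^[k] x, hxU, ?_⟩, hyV⟩
        rw [← Function.iterate_add_apply, ← Function.iterate_add_apply, Nat.add_comm]
      · intro j
        exact hprop n ⟨f^[n] x, ⟨x, hxW, rfl⟩, hyW'⟩ j

/-- A strongly multi-transitive map on a compact space is surjective. -/
lemma surj_of_smt_aux {X : Type*} [MetricSpace X] [CompactSpace X] (f : X → X)
    (hf : Continuous f) (hS : StrongMultiTrans f) (x₀ : X) : Surjective f := by
  by_contra hns
  rw [Function.Surjective] at hns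
  push_neg at hns
  obtain ⟨z, hz⟩ := hns
  have hzr : z ∉ range f := by rintro ⟨a, rfl⟩; exact hz a rfl
  have hrc : IsClosed (range f) := (isCompact_range hf).isClosed
  have htrans := hS 1 le_rfl (fun _ => 1) (fun _ => le_rfl)
  have _inst : Nonempty (Fin 1 → X) := ⟨fun _ => x₀⟩
  obtain ⟨n, hn1, ⟨y, ⟨x, -, rfl⟩, hyV⟩⟩ :=
    htrans univ {x : Fin 1 → X | x 0 ∈ (range f)ᶜ} isOpen_univ
      (hrc.isOpen_compl.preimage (continuous_apply 0))
      univ_nonempty ⟨fun _ => z, hzr⟩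
  rw [iter_pi_aux] at hyV
  have hmem : f^[n * 1] (x 0) ∉ range f := hyV
  obtain ⟨m, rfl⟩ : ∃ m, n = m + 1 := ⟨n - 1, by omega⟩
  apply hmem
  rw [Nat.mul_one, Function.iterate_succ_apply']
  exact mem_range_self _

theorem strongMultiTrans_iff_familyInfty_mixing
    {X : Type*} [MetricSpace X] [CompactSpace X] (f : X → X) (hf : Continuous f) :
    StrongMultiTrans f ↔
      ∀ U V : Set (X × X), IsOpen U → IsOpen V → U.Nonempty → V.Nonempty →
        ∀ r : ℕ, 1 ≤ r → ∀ nv : Fin r → ℕ, ∃ k : ℕ, 1 ≤ k ∧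
          ∀ i : Fin r, k * ((i : ℕ) + 1) + nv i ∈
            HittingTimes (fun p : X × X => (f p.1, f p.2)) U V := by
  constructor
  · -- Forward direction
    intro hS U V hUo hVo hUne hVne r hr nv
    obtain ⟨⟨u1, u2⟩, hu⟩ := hUne
    obtain ⟨U1, U2, hU1o, hU2o, hu1, hu2, hUsub⟩ := isOpen_prod_iff.1 hUo u1 u2 hu
    obtain ⟨⟨v1, v2⟩, hv⟩ := hVne
    obtain ⟨V1, V2, hV1o, hV2o, hv1, hv2, hVsub⟩ := isOpen_prod_iff.1 hVo v1 v2 hv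
    have hsurj : Surjective f := surj_of_smt_aux f hf hS u1
    have hsurjn : ∀ n : ℕ, Surjective f^[n] := hsurj.iterate
    set a : Fin (2 * r) → ℕ := fun j => j.val / 2 + 1 with ha_def
    have htrans := hS (2 * r) (by omega) a (fun j => Nat.le_add_left 1 _)
    set di : Fin (2 * r) → Fin r :=
      fun j => ⟨j.val / 2, by have := j.isLt; omega⟩ with hdi_def
    set O : Fin (2 * r) → Set X := fun j => if j.val % 2 = 0 then U1 else U2 with hO_def
    set T : Fin (2 * r) → Set X :=
      fun j => f^[nv (di j)] ⁻¹' (if j.val % 2 = 0 then V1 else V2) with hT_def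
    have hOopen : ∀ j, IsOpen (O j) := by
      intro j; simp only [hO_def]; split <;> assumption
    have hTopen : ∀ j, IsOpen (T j) := by
      intro j; simp only [hT_def]
      refine (hf.iterate _).isOpen_preimage _ ?_
      split <;> assumption
    have hOne : ∀ j, (O j).Nonempty := by
      intro j; simp only [hO_def]; split
      · exact ⟨u1, hu1⟩
      · exact ⟨u2, hu2⟩
    have hTne : ∀ j, (T j).Nonempty := by
      intro j; simp only [hT_def]
      have hv' : (if j.val % 2 = 0 then V1 else V2).Nonempty := by
        split
        · exact ⟨v1, hv1⟩
        · exact ⟨v2, hv2⟩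
      obtain ⟨w, hw⟩ := hv'
      obtain ⟨w', hw'⟩ := hsurjn (nv (di j)) w
      exact ⟨w', by simp [mem_preimage, hw', hw]⟩
    obtain ⟨k, hk1, ⟨y, ⟨x, hxO, rfl⟩, hyT⟩⟩ :=
      htrans (Set.pi univ O) (Set.pi univ T)
        (isOpen_set_pi finite_univ (fun j _ => hOopen j))
        (isOpen_set_pi finite_univ (fun j _ => hTopen j))
        (Set.univ_pi_nonempty_iff.2 hOne) (Set.univ_pi_nonempty_iff.2 hTne)
    rw [iter_pi_aux] at hyT
    refine ⟨k, hk1, fun i => ?_⟩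
    have hi2 : 2 * i.val < 2 * r := by have := i.isLt; omega
    have hi2' : 2 * i.val + 1 < 2 * r := by have := i.isLt; omega
    set j0 : Fin (2 * r) := ⟨2 * i.val, hi2⟩ with hj0
    set j1 : Fin (2 * r) := ⟨2 * i.val + 1, hi2'⟩ with hj1
    have hj0e : j0.val % 2 = 0 := by show 2 * i.val % 2 = 0; omega
    have hj1o : ¬ (j1.val % 2 = 0) := by show ¬((2 * i.val + 1) % 2 = 0); omega
    have hdij0 : di j0 = i := by
      apply Fin.ext; show 2 * i.val / 2 = i.val; omega
    have hdij1 : di j1 = i := by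
      apply Fin.ext; show (2 * i.val + 1) / 2 = i.val; omega
    have haj0 : a j0 = i.val + 1 := by show 2 * i.val / 2 + 1 = i.val + 1; omega
    have haj1 : a j1 = i.val + 1 := by show (2 * i.val + 1) / 2 + 1 = i.val + 1; omega
    have hx0 : x j0 ∈ U1 := by
      have h := hxO j0 (mem_univ _)
      simp only [hO_def] at h
      rwa [if_pos hj0e] at h
    have hx1 : x j1 ∈ U2 := by
      have h := hxO j1 (mem_univ _)
      simp only [hO_def] at h
      rwa [if_neg hj1o] at h
    have hy0 : f^[nv i] (f^[k * (i.val + 1)] (x j0)) ∈ V1 := by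
      have h := hyT j0 (mem_univ _)
      simp only [hT_def, mem_preimage] at h
      rwa [haj0, hdij0, if_pos hj0e] at h
    have hy1 : f^[nv i] (f^[k * (i.val + 1)] (x j1)) ∈ V2 := by
      have h := hyT j1 (mem_univ _)
      simp only [hT_def, mem_preimage] at h
      rwa [haj1, hdij1, if_neg hj1o] at h
    have hone : 1 ≤ k * (i.val + 1) + nv i := by
      have h1 : 1 * 1 ≤ k * (i.val + 1) :=
        Nat.mul_le_mul hk1 (Nat.succ_le_succ (Nat.zero_le _))
      omega
    have hm0 : f^[k * (i.val + 1) + nv i] (x j0) ∈ V1 := by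
      rw [Nat.add_comm (k * (i.val + 1)) (nv i), Function.iterate_add_apply]
      exact hy0
    have hm1 : f^[k * (i.val + 1) + nv i] (x j1) ∈ V2 := by
      rw [Nat.add_comm (k * (i.val + 1)) (nv i), Function.iterate_add_apply]
      exact hy1
    exact ⟨hone, ⟨(f^[k * (i.val + 1) + nv i] (x j0), f^[k * (i.val + 1) + nv i] (x j1)),
      ⟨(x j0, x j1), hUsub ⟨hx0, hx1⟩, iter_prod_aux f _ _⟩, hVsub ⟨hm0, hm1⟩⟩⟩
  · -- Backward direction
    intro H r hr a ha
    intro SU SV hSUo hSVo hSUne hSVne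
    obtain ⟨xu, hxu⟩ := hSUne
    obtain ⟨xv, hxv⟩ := hSVne
    obtain ⟨U, hUo, hxU, hUsub⟩ := pi_subset_of_open_aux hSUo hxu
    obtain ⟨V, hVo, hxV, hVsub⟩ := pi_subset_of_open_aux hSVo hxv
    have hX : Nonempty X := ⟨xu ⟨0, hr⟩⟩
    have H2 : ∀ A B C D : Set X, IsOpen A → IsOpen B → IsOpen C → IsOpen D →
        A.Nonempty → B.Nonempty → C.Nonempty → D.Nonempty →
        ∃ k : ℕ, 1 ≤ k ∧ (A ∩ f^[k] ⁻¹' C).Nonempty ∧ (B ∩ f^[k] ⁻¹' D).Nonempty := by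
      intro A B C D hA hB hC hD hAne hBne hCne hDne
      obtain ⟨k, hk1, hmem⟩ := H (A ×ˢ B) (C ×ˢ D) (hA.prod hB) (hC.prod hD)
        (hAne.prod hBne) (hCne.prod hDne) 1 le_rfl (fun _ => 0)
      have := hmem ⟨0, Nat.one_pos⟩
      simp only [HittingTimes, mem_setOf_eq, Fin.val_zero, Nat.zero_add, Nat.mul_one,
        Nat.add_zero] at this
      obtain ⟨hk', ⟨⟨c, d⟩, ⟨⟨p, q⟩, ⟨hpA, hqB⟩, heq⟩, hcC, hdD⟩⟩ := this
      rw [iter_prod_aux] at heq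
      refine ⟨k, hk', ⟨p, hpA, ?_⟩, ⟨q, hqB, ?_⟩⟩
      · simp only [mem_preimage]; rw [show f^[k] p = c from congrArg Prod.fst heq]
        exact hcC
      · simp only [mem_preimage]; rw [show f^[k] q = d from congrArg Prod.snd heq]
        exact hdD
    have hUne : ∀ i, (U i).Nonempty := fun i => ⟨xu i, hxU i⟩
    have hVne : ∀ i, (V i).Nonempty := fun i => ⟨xv i, hxV i⟩
    obtain ⟨W, W', hWo, hW'o, hWne, hW'ne, hprop⟩ :=
      furst_inter_aux f hX H2 hf r U V hUo hVo hUne hVne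
    set A : ℕ := Finset.univ.sup a with hA_def
    have hle : ∀ i, a i ≤ A := fun i => Finset.le_sup (Finset.mem_univ i)
    have hA1 : 1 ≤ A := le_trans (ha ⟨0, hr⟩) (hle ⟨0, hr⟩)
    obtain ⟨k, hk1, hmem⟩ := H (W ×ˢ W) (W' ×ˢ W') (hWo.prod hWo) (hW'o.prod hW'o)
      (hWne.prod hWne) (hW'ne.prod hW'ne) A hA1 (fun _ => 0)
    have hhit : ∀ i : Fin r, (f^[k * a i] '' W ∩ W').Nonempty := by
      intro i
      have hai : a i - 1 < A := by have h1 := ha i; have h2 := hle i; omega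
      have := hmem ⟨a i - 1, hai⟩
      simp only [HittingTimes, mem_setOf_eq, Nat.add_zero] at this
      have hval : (a i - 1) + 1 = a i := by have := ha i; omega
      rw [hval] at this
      obtain ⟨-, ⟨⟨c, d⟩, ⟨⟨p, q⟩, ⟨hpW, hqW⟩, heq⟩, hcW', hdW'⟩⟩ := this
      rw [iter_prod_aux] at heq
      exact ⟨c, ⟨p, hpW, congrArg Prod.fst heq⟩, hcW'⟩
    have hw : ∀ i : Fin r, ∃ x, x ∈ U i ∧ f^[k * a i] x ∈ V i := by
      intro i
      obtain ⟨y, ⟨x, hxUi, rfl⟩, hyVi⟩ := hprop (k * a i) (hhit i) i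
      exact ⟨x, hxUi, hyVi⟩
    choose w hw1 hw2 using hw
    refine ⟨k, hk1, ⟨fun i => f^[k * a i] (w i),
      ⟨w, hUsub (fun i _ => hw1 i), ?_⟩, hVsub (fun i _ => hw2 i)⟩⟩
    rw [iter_pi_aux]
end

section
/- Let (X,f) be a topological dynamical system and A a sequence of positive integers whose set of values contains a difference set, i.e., there is an infinite set B ⊆ ℕ with {b − b' : b, b' ∈ B, b > b'} contained in the set of terms of A. If (X,f) is multi-transitive with respect to the sequence A, then (X,f) is strongly scattering, i.e., weakly disjoint from every E-system. -/
open Function Set Filter Topology MeasureTheory ENNReal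

private lemma iter_pi_apply {X : Type*} (f : X → X) (a : ℕ → ℕ) (n : ℕ) (z : ℕ → X) :
    (fun x : ℕ → X => fun i => f^[a i] (x i))^[n] z = fun i => f^[n * a i] (z i) := by
  induction n with
  | zero => simp
  | succ n ih =>
    rw [Function.iterate_succ_apply', ih]
    funext i
    simp only
    rw [← Function.iterate_add_apply, Nat.succ_mul, Nat.add_comm]

private lemma prod_iter_apply {X Y : Type*} (f : X → X) (g : Y → Y) (n : ℕ) (p : X × Y) :
    (fun p : X × Y => (f p.1, g p.2))^[n] p = (f^[n] p.1, g^[n] p.2) := by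
  have : (fun p : X × Y => (f p.1, g p.2)) = Prod.map f g := rfl
  rw [this, Prod.map_iterate]
  rfl

theorem seqMultiTrans_diffSet_stronglyScattering
    {X : Type*} [MetricSpace X] [CompactSpace X] (f : X → X) (hf : Continuous f)
    (a : ℕ → ℕ) (ha : ∀ i, 1 ≤ a i) (B : Set ℕ) (hB : B.Infinite)
    (hBa : ∀ b ∈ B, ∀ b' ∈ B, b' < b → b - b' ∈ Set.range a)
    (hA : IsTopTransitive (fun x : ℕ → X => fun i => f^[a i] (x i))) :
    ∀ (Y : Type*) [MetricSpace Y] [CompactSpace Y] [MeasurableSpace Y] [BorelSpace Y]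
      (g : Y → Y), Continuous g → IsTopTransitive g →
      (∃ μ : Measure Y, IsProbabilityMeasure μ ∧
        (∀ s : Set Y, MeasurableSet s → μ (g ⁻¹' s) = μ s) ∧
        (∀ W : Set Y, IsOpen W → W.Nonempty → 0 < μ W)) →
      IsTopTransitive (fun p : X × Y => (f p.1, g p.2)) := by
  intro Y _ _ _ _ g hg hgtrans ⟨μ, hμprob, hμinv, hμpos⟩
  haveI := hμprob
  -- transitivity of f itself
  have hftrans : ∀ U V : Set X, IsOpen U → IsOpen V → U.Nonempty → V.Nonempty →
      ∃ n, 1 ≤ n ∧ ∃ x ∈ U, f^[n] x ∈ V := by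
    intro U V hU hV ⟨x₀, hx₀⟩ ⟨v₀, hv₀⟩
    obtain ⟨n, hn, z, ⟨w, hw, hwz⟩, hzV⟩ := hA {u : ℕ → X | u 0 ∈ U} {u : ℕ → X | u 0 ∈ V}
      (hU.preimage (continuous_apply 0)) (hV.preimage (continuous_apply 0))
      ⟨fun _ => x₀, hx₀⟩ ⟨fun _ => v₀, hv₀⟩
    refine ⟨n * a 0, Nat.one_le_iff_ne_zero.mpr (Nat.mul_ne_zero (by omega) (by have := ha 0; omega)), w 0, hw, ?_⟩
    have h0 : z 0 = f^[n * a 0] (w 0) := by rw [← hwz, iter_pi_apply]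
    rw [← h0]; exact hzV
  -- nonemptiness of preimages of open sets under iterates of f
  have hpre : ∀ V : Set X, IsOpen V → V.Nonempty → ∀ m, ((f^[m]) ⁻¹' V).Nonempty := by
    intro V hV hVne m
    have key : ∀ m : ℕ, ∃ n, m ≤ n ∧ ∃ x ∈ V, f^[n] x ∈ V := by
      intro m
      induction m with
      | zero =>
        obtain ⟨x, hx⟩ := hVne
        exact ⟨0, le_refl 0, x, hx, hx⟩
      | succ m ih =>
        obtain ⟨n, hmn, x, hxV, hxnV⟩ := ih
        have hopen : IsOpen (V ∩ (f^[n]) ⁻¹' V) := hV.inter (hV.preimage (hf.iterate n))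
        have hne : (V ∩ (f^[n]) ⁻¹' V).Nonempty := ⟨x, hxV, hxnV⟩
        obtain ⟨n', hn', x', hx', hfx'⟩ := hftrans _ _ hopen hopen hne hne
        refine ⟨n + n', by omega, x', hx'.1, ?_⟩
        rw [Function.iterate_add_apply]
        exact hfx'.2
    obtain ⟨n, hmn, x, hxV, hxnV⟩ := key m
    refine ⟨f^[n - m] x, ?_⟩
    rw [Set.mem_preimage, ← Function.iterate_add_apply, Nat.add_sub_cancel' hmn]
    exact hxnV
  -- iterated invariance of μ
  have hinv : ∀ s : Set Y, MeasurableSet s → ∀ j : ℕ, μ ((g^[j]) ⁻¹' s) = μ s := by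
    intro s hs j
    induction j with
    | zero => simp
    | succ j ih =>
      rw [Function.iterate_succ, Set.preimage_comp]
      rw [hμinv _ ((hg.iterate j).measurable hs)]
      exact ih
  -- main argument
  intro O₁ O₂ hO₁ hO₂ ⟨p, hp⟩ ⟨q, hq⟩
  obtain ⟨U₁, W₁, hU₁, hW₁, hpU, hpW, hsub₁⟩ :=
    isOpen_prod_iff.mp hO₁ p.1 p.2 (by simpa using hp)
  obtain ⟨U₂, W₂, hU₂, hW₂, hqU, hqW, hsub₂⟩ :=
    isOpen_prod_iff.mp hO₂ q.1 q.2 (by simpa using hq)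
  -- step 1: transitivity of g gives m
  obtain ⟨m, hm1, y₀, ⟨y₁, hy₁, rfl⟩, hy₂⟩ := hgtrans W₁ W₂ hW₁ hW₂ ⟨p.2, hpW⟩ ⟨q.2, hqW⟩
  set W : Set Y := W₁ ∩ (g^[m]) ⁻¹' W₂ with hWdef
  have hWopen : IsOpen W := hW₁.inter (hW₂.preimage (hg.iterate m))
  have hWne : W.Nonempty := ⟨y₁, hy₁, hy₂⟩
  have hWpos : 0 < μ W := hμpos W hWopen hWne
  have hWtop : μ W ≠ ⊤ := measure_ne_top μ W
  -- step 2: choose k with 1 < k * μ W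
  obtain ⟨k, hk⟩ : ∃ k : ℕ, 1 < (k : ℝ≥0∞) * μ W := by
    obtain ⟨k, hk⟩ := ENNReal.exists_nat_gt (r := (μ W)⁻¹) (by simp [hWpos.ne'])
    refine ⟨k, ?_⟩
    rw [← ENNReal.div_lt_iff (Or.inl hWpos.ne') (Or.inl hWtop)]
    simpa [ENNReal.div_eq_inv_mul] using hk
  -- step 3: pick k elements of B
  set b : ℕ → ℕ := Nat.nth (· ∈ B) with hbdef
  have hbmem : ∀ i, b i ∈ B := fun i => Nat.nth_mem_of_infinite hB i
  have hbmono : StrictMono b := fun i j hij => (Nat.nth_lt_nth hB).mpr hij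
  have hc : ∀ i j : ℕ, i < j → ∃ cij, a cij = b j - b i := by
    intro i j hij
    obtain ⟨cij, hcij⟩ := hBa (b j) (hbmem j) (b i) (hbmem i) (hbmono hij)
    exact ⟨cij, hcij⟩
  set c : ℕ → ℕ → ℕ := fun i j => if h : i < j then (hc i j h).choose else 0 with hcdef
  have hca : ∀ i j (h : i < j), a (c i j) = b j - b i := by
    intro i j h
    simp only [hcdef, dif_pos h]
    exact (hc i j h).choose_spec
  set M : ℕ := (Finset.sup ((Finset.range k) ×ˢ (Finset.range k)) fun p => c p.1 p.2) + 1 with hMdef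
  have hM : ∀ i j : ℕ, i < k → j < k → c i j < M := by
    intro i j hi hj
    have : c i j ≤ Finset.sup ((Finset.range k) ×ˢ (Finset.range k)) fun p => c p.1 p.2 :=
      Finset.le_sup (s := (Finset.range k) ×ˢ (Finset.range k)) (f := fun p : ℕ × ℕ => c p.1 p.2)
        (b := (i, j))
        (Finset.mem_product.mpr ⟨Finset.mem_range.mpr hi, Finset.mem_range.mpr hj⟩)
    omega
  -- step 4: apply A-transitivity with cylinders
  set VX : Set X := (f^[m]) ⁻¹' U₂ with hVXdef
  have hVXopen : IsOpen VX := hU₂.preimage (hf.iterate m)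
  have hVXne : VX.Nonempty := hpre U₂ hU₂ ⟨q.1, hqU⟩ m
  obtain ⟨vx, hvx⟩ := hVXne
  obtain ⟨n, hn1, z, ⟨w, hwU, hwz⟩, hzV⟩ :=
    hA (Set.pi (Set.Iio M) fun _ => U₁) (Set.pi (Set.Iio M) fun _ => VX)
      (isOpen_set_pi (Set.finite_Iio M) fun _ _ => hU₁)
      (isOpen_set_pi (Set.finite_Iio M) fun _ _ => hVXopen)
      ⟨fun _ => p.1, fun _ _ => hpU⟩ ⟨fun _ => vx, fun _ _ => hvx⟩
  -- step 5: pigeonhole on the measure side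
  set s : Fin k → Set Y := fun i => (g^[n * b i]) ⁻¹' W with hsdef
  have hmeas : ∀ i : Fin k, MeasurableSet (s i) :=
    fun i => (hg.iterate _).measurable hWopen.measurableSet
  have hμs : ∀ i : Fin k, μ (s i) = μ W := fun i => hinv W hWopen.measurableSet _
  have hexij : ∃ i j : Fin k, (i : ℕ) < j ∧ (s i ∩ s j).Nonempty := by
    by_contra h
    push_neg at h
    have hdisj : Pairwise (Function.onFun Disjoint s) := by
      intro i j hij
      rw [Function.onFun, Set.disjoint_iff_inter_eq_empty]
      rcases Nat.lt_or_ge (i : ℕ) (j : ℕ) with hlt | hge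
      · exact h i j hlt
      · have hlt : (j : ℕ) < i := by
          rcases Nat.lt_or_ge (j : ℕ) (i : ℕ) with h' | h'
          · exact h'
          · exact absurd (Fin.ext (Nat.le_antisymm h' hge)) hij
        rw [Set.inter_comm]
        exact h j i hlt
    have hsum : μ (⋃ i, s i) = (k : ℝ≥0∞) * μ W := by
      rw [measure_iUnion hdisj hmeas]
      simp [hμs, tsum_fintype, Finset.sum_const]
    have hle : μ (⋃ i, s i) ≤ 1 := prob_le_one
    rw [hsum] at hle
    exact absurd hk (not_lt.mpr hle)
  obtain ⟨i, j, hij, y, hyi, hyj⟩ := hexij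
  -- step 6: conclude
  have hbij : b i < b j := hbmono hij
  set t : ℕ := n * b j - n * b i with htdef
  have hble : n * b i ≤ n * b j := Nat.mul_le_mul_left n (le_of_lt hbij)
  have hta : t = n * a (c i j) := by
    rw [hca i j hij, htdef, Nat.mul_sub]
  -- the f side
  set x : X := w (c i j) with hxdef
  have hcij_lt : c i j < M := hM i j i.isLt j.isLt
  have hx1 : x ∈ U₁ := hwU (c i j) hcij_lt
  have hzc : z (c i j) ∈ VX := hzV (c i j) hcij_lt
  have hzw : z (c i j) = f^[n * a (c i j)] x := by rw [← hwz, iter_pi_apply]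
  have hfx : f^[m + t] x ∈ U₂ := by
    rw [Function.iterate_add_apply, hta, ← hzw]
    exact hzc
  -- the g side
  set y' : Y := g^[n * b i] y with hy'def
  have hy'W : y' ∈ W := hyi
  have hgt : g^[t] y' ∈ W := by
    have : g^[t] y' = g^[n * b j] y := by
      rw [hy'def, ← Function.iterate_add_apply, htdef, Nat.sub_add_cancel hble]
    rw [this]
    exact hyj
  have hgy : g^[m + t] y' ∈ W₂ := by
    rw [Function.iterate_add_apply]
    exact hgt.2
  -- final assembly
  refine ⟨m + t, by omega, (f^[m + t] x, g^[m + t] y'), ⟨(x, y'), hsub₁ ⟨hx1, hy'W.1⟩, ?_⟩,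
    hsub₂ ⟨hfx, hgy⟩⟩
  exact prod_iter_apply f g (m + t) (x, y')
end
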